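/- arXiv:2206.09882 — 4 statements merged into one kernel-verified Lean document; each statement's English description precedes it below -/
import Mathlib

section
/- Let α ∈ [−1,1] and let u ∈ W^{1,2}((−1,1)³; ℝ³) satisfy e₁₁(u) = e₂₂(u) = e₃₃(u) = e₁₂(u) = e₁₃(u) = 0 and |e₂₃(u)| ≤ 1 almost everywhere, together with the boundary condition u₃(x₁, x₂, ±1) = α x₁ x₂. Then there exist constants c, d ∈ ℝ and a Lipschitz function ψ : (−1,1) → ℝ with Lipschitz constant at most 2(1 − |α|) such that u(x) = (−α x₂x₃ + d x₂ + c, α x₁x₃ − d x₁ + ψ(x₃), α x₁x₂). -/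
open MeasureTheory Set

/-- The open cube `(-1,1)³`. -/
def cube : Set (Fin 3 → ℝ) := {x | ∀ i, x i ∈ Ioo (-1 : ℝ) 1}

/-- The closed cube `[-1,1]³`. -/
def cubeCl : Set (Fin 3 → ℝ) := {x | ∀ i, x i ∈ Icc (-1 : ℝ) 1}

/-- Linearized strain `e_{ij}(u) = (∂_j u_i + ∂_i u_j)/2`. -/
noncomputable def strain (u : (Fin 3 → ℝ) → (Fin 3 → ℝ)) (i j : Fin 3)
    (x : Fin 3 → ℝ) : ℝ :=
  (fderiv ℝ u x (Pi.single j 1) i + fderiv ℝ u x (Pi.single i 1) j) / 2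

section helpers

lemma exists_good {X : Type*} [MeasurableSpace X] {μ : Measure X} {S : Set X}
    (hS : μ S ≠ 0) {P : X → Prop} (h : ∀ᵐ x ∂μ, P x) : ∃ x ∈ S, P x := by
  by_contra hc
  push_neg at hc
  refine hS (measure_mono_null (fun x hx => ?_) (ae_iff.1 h))
  simpa using hc x hx

lemma eqOn_of_ae {X : Type*} [TopologicalSpace X] [MeasurableSpace X] {μ : Measure X}
    [μ.IsOpenPosMeasure] {f g : X → ℝ} {U : Set X} (hU : IsOpen U)
    (hf : ∀ x ∈ U, ContinuousAt f x) (hg : ∀ x ∈ U, ContinuousAt g x)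
    (h : ∀ᵐ x ∂μ, x ∈ U → f x = g x) : ∀ x ∈ U, f x = g x := by
  by_contra hc
  push_neg at hc
  obtain ⟨x₀, hx₀U, hx₀⟩ := hc
  set V : Set X := U ∩ {x | f x ≠ g x} with hV
  have hVopen : IsOpen V := by
    rw [isOpen_iff_mem_nhds]
    rintro x ⟨hxU, hxne⟩
    have h1 : ∀ᶠ y in nhds x, f y ≠ g y :=
      (((hf x hxU).sub (hg x hxU)).eventually_ne (sub_ne_zero.2 hxne)).mono
        fun y hy => sub_ne_zero.1 hy
    filter_upwards [h1, hU.mem_nhds hxU] with y h1 h2 using ⟨h2, h1⟩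
  have hV0 : μ V = 0 := by
    refine measure_mono_null (fun x hx => ?_) (ae_iff.1 h)
    simp only [mem_setOf_eq]
    exact fun h' => hx.2 (h' hx.1)
  exact absurd hV0 (hVopen.measure_ne_zero μ ⟨x₀, hx₀U, hx₀⟩)

lemma uIcc_subset_Ioo' {a b s t : ℝ} (hs : s ∈ Ioo a b) (ht : t ∈ Ioo a b) :
    uIcc s t ⊆ Ioo a b := by
  intro r hr
  rw [Set.mem_uIcc] at hr
  obtain ⟨h1, h2⟩ | ⟨h1, h2⟩ := hr <;>
    exact ⟨by linarith [hs.1, ht.1], by linarith [hs.2, ht.2]⟩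

lemma const_of_deriv_ae {f : ℝ → ℝ} {c : ℝ}
    (hd : ∀ r ∈ Ioo (-1:ℝ) 1, HasDerivAt f (deriv f r) r)
    (h : ∀ᵐ r, r ∈ Ioo (-1:ℝ) 1 → deriv f r = c) :
    ∀ s ∈ Ioo (-1:ℝ) 1, ∀ t ∈ Ioo (-1:ℝ) 1, f t = f s + c * (t - s) := by
  intro s hs t ht
  have hsub : uIcc s t ⊆ Ioo (-1:ℝ) 1 := uIcc_subset_Ioo' hs ht
  have hae : ∀ᵐ r ∂(volume.restrict (Set.uIoc s t)), deriv f r = c := by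
    have h1 : ∀ᵐ r ∂(volume.restrict (Set.uIoc s t)), r ∈ Set.uIoc s t :=
      ae_restrict_mem measurableSet_uIoc
    filter_upwards [ae_restrict_of_ae h, h1] with r hr h1
    exact hr (hsub (uIoc_subset_uIcc h1))
  have hint : IntervalIntegrable (deriv f) volume s t :=
    (intervalIntegrable_const (c := c)).congr_ae (Filter.EventuallyEq.symm hae)
  have hftc := intervalIntegral.integral_eq_sub_of_hasDerivAt
    (fun r hr => hd r (hsub hr)) hint
  have h2 : ∫ r in s..t, deriv f r = ∫ _ in s..t, c := by
    refine intervalIntegral.integral_congr_ae ?_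
    filter_upwards [h] with r hr h2
    exact hr (hsub (uIoc_subset_uIcc h2))
  rw [h2, intervalIntegral.integral_const, smul_eq_mul] at hftc
  linarith

lemma lip_of_deriv_ae {f : ℝ → ℝ} {L : ℝ}
    (hd : ∀ r ∈ Ioo (-1:ℝ) 1, HasDerivAt f (deriv f r) r)
    (h : ∀ᵐ r, r ∈ Ioo (-1:ℝ) 1 → |deriv f r| ≤ L) :
    ∀ s ∈ Ioo (-1:ℝ) 1, ∀ t ∈ Ioo (-1:ℝ) 1, |f t - f s| ≤ L * |t - s| := by
  intro s hs t ht
  have hsub : uIcc s t ⊆ Ioo (-1:ℝ) 1 := uIcc_subset_Ioo' hs ht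
  have haebd : ∀ᵐ r, r ∈ Set.uIoc s t → ‖deriv f r‖ ≤ L := by
    filter_upwards [h] with r hr h2
    exact hr (hsub (uIoc_subset_uIcc h2))
  have hint : IntervalIntegrable (deriv f) volume s t := by
    rw [intervalIntegrable_iff]
    refine Integrable.mono' (g := fun _ => L) (integrableOn_const ?_)
      (measurable_deriv f).aestronglyMeasurable ?_
    · exact measure_Ioc_lt_top.ne
    · rw [ae_restrict_iff' measurableSet_uIoc]
      filter_upwards [haebd] with r hr using hr
  have hftc := intervalIntegral.integral_eq_sub_of_hasDerivAt
    (fun r hr => hd r (hsub hr)) hint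
  calc |f t - f s| = ‖∫ r in s..t, deriv f r‖ := by rw [hftc]; rfl
    _ ≤ L * |t - s| := intervalIntegral.norm_integral_le_of_norm_le_const_ae haebd

end helpers

lemma slice3 (i : Fin 3) {P : (Fin 3 → ℝ) → Prop} (h : ∀ᵐ x : Fin 3 → ℝ, P x) :
    ∀ᵐ y : Fin 2 → ℝ, ∀ᵐ t : ℝ, P (Fin.insertNth i t y) := by
  set e := MeasurableEquiv.piFinSuccAbove (fun _ : Fin 3 => ℝ) i with he
  have hmp : MeasurePreserving e volume volume :=
    volume_preserving_piFinSuccAbove (fun _ : Fin 3 => ℝ) i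
  have hsymm : ∀ z : ℝ × (Fin 2 → ℝ), e.symm z = Fin.insertNth i z.1 z.2 := fun z => rfl
  have h0 : volume {x : Fin 3 → ℝ | ¬ P x} = 0 := ae_iff.1 h
  have h1 : (volume : Measure (ℝ × (Fin 2 → ℝ))) {z | ¬ P (Fin.insertNth i z.1 z.2)} = 0 := by
    have := (hmp.symm e).quasiMeasurePreserving.preimage_null h0
    simpa [hsymm] using this
  have h2 : (volume : Measure ((Fin 2 → ℝ) × ℝ)) {w | ¬ P (Fin.insertNth i w.2 w.1)} = 0 := by
    have hswap : MeasurePreserving (Prod.swap : (Fin 2 → ℝ) × ℝ → ℝ × (Fin 2 → ℝ))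
        volume volume := by
      rw [Measure.volume_eq_prod, Measure.volume_eq_prod]
      exact Measure.measurePreserving_swap
    exact hswap.quasiMeasurePreserving.preimage_null h1
  have h3 : ∀ᵐ w : (Fin 2 → ℝ) × ℝ, P (Fin.insertNth i w.2 w.1) := by
    rw [ae_iff]; exact h2
  rw [Measure.volume_eq_prod] at h3
  exact Measure.ae_ae_of_ae_prod h3

lemma unslice3 (i : Fin 3) {P : (Fin 3 → ℝ) → Prop}
    (h : ∀ᵐ y : Fin 2 → ℝ, ∀ t : ℝ, P (Fin.insertNth i t y)) : ∀ᵐ x : Fin 3 → ℝ, P x := by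
  set e := MeasurableEquiv.piFinSuccAbove (fun _ : Fin 3 => ℝ) i with he
  have hmp : MeasurePreserving e volume volume :=
    volume_preserving_piFinSuccAbove (fun _ : Fin 3 => ℝ) i
  have h0 : volume {y : Fin 2 → ℝ | ¬ ∀ t : ℝ, P (Fin.insertNth i t y)} = 0 := ae_iff.1 h
  have h1 : (volume : Measure (ℝ × (Fin 2 → ℝ)))
      (univ ×ˢ {y : Fin 2 → ℝ | ¬ ∀ t : ℝ, P (Fin.insertNth i t y)}) = 0 := by
    rw [Measure.volume_eq_prod, Measure.prod_prod, h0, mul_zero]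
  have h2 : (volume : Measure (ℝ × (Fin 2 → ℝ))) {z | ¬ P (Fin.insertNth i z.1 z.2)} = 0 := by
    refine measure_mono_null (fun z hz => ?_) h1
    simp only [mem_setOf_eq, mem_prod, mem_univ, true_and] at *
    exact fun hall => hz (hall z.1)
  rw [ae_iff]
  have := hmp.quasiMeasurePreserving.preimage_null h2
  have hset : {a : Fin 3 → ℝ | ¬ P (Fin.insertNth i (e a).1 (e a).2)} = {a | ¬ P a} := by
    ext a
    have ha : Fin.insertNth i (e a).1 (e a).2 = a := Fin.insertNth_self_removeNth i a
    rw [mem_setOf_eq, mem_setOf_eq, ha]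
  rw [← hset]
  exact this

lemma slice2 {P : (Fin 2 → ℝ) → Prop} (h : ∀ᵐ y : Fin 2 → ℝ, P y) :
    ∀ᵐ b : ℝ, ∀ᵐ a : ℝ, P ![a, b] := by
  have hmp : MeasurePreserving (MeasurableEquiv.finTwoArrow : (Fin 2 → ℝ) ≃ᵐ ℝ × ℝ)
      volume volume := volume_preserving_finTwoArrow ℝ
  have h0 : volume {y : Fin 2 → ℝ | ¬ P y} = 0 := ae_iff.1 h
  have h1 : (volume : Measure (ℝ × ℝ)) {z | ¬ P ![z.1, z.2]} = 0 := by
    have := (hmp.symm _).quasiMeasurePreserving.preimage_null h0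
    have hs : ∀ z : ℝ × ℝ, MeasurableEquiv.finTwoArrow.symm z = ![z.1, z.2] := fun z => by
      funext j; fin_cases j <;> rfl
    simpa [hs] using this
  have h2 : (volume : Measure (ℝ × ℝ)) {w : ℝ × ℝ | ¬ P ![w.2, w.1]} = 0 := by
    have hswap : MeasurePreserving (Prod.swap : ℝ × ℝ → ℝ × ℝ) volume volume := by
      rw [Measure.volume_eq_prod]; exact Measure.measurePreserving_swap
    exact hswap.quasiMeasurePreserving.preimage_null h1
  have h3 : ∀ᵐ w : ℝ × ℝ, P ![w.2, w.1] := by rw [ae_iff]; exact h2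
  rw [Measure.volume_eq_prod] at h3
  exact Measure.ae_ae_of_ae_prod h3

def square : Set (Fin 2 → ℝ) := {y | ∀ j, y j ∈ Ioo (-1 : ℝ) 1}

lemma isOpen_cube : IsOpen cube := by
  have : cube = Set.pi univ (fun _ : Fin 3 => Ioo (-1:ℝ) 1) := by
    ext x; simp [cube, Set.mem_pi]
  rw [this]
  exact isOpen_set_pi finite_univ (fun i _ => isOpen_Ioo)

lemma isOpen_square : IsOpen square := by
  have : square = Set.pi univ (fun _ : Fin 2 => Ioo (-1:ℝ) 1) := by
    ext x; simp [square, Set.mem_pi]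
  rw [this]
  exact isOpen_set_pi finite_univ (fun i _ => isOpen_Ioo)

lemma square_vol_ne : (volume : Measure (Fin 2 → ℝ)) square ≠ 0 :=
  isOpen_square.measure_ne_zero volume ⟨0, fun j => by norm_num⟩

lemma Ioo_vol_ne {a b : ℝ} (h : a < b) : (volume : Measure ℝ) (Ioo a b) ≠ 0 := by
  rw [Real.volume_Ioo]
  simp [h, sub_pos.2 h]

lemma insertNth_mem_cube {i : Fin 3} {t : ℝ} {y : Fin 2 → ℝ} :
    Fin.insertNth i t y ∈ cube ↔ t ∈ Ioo (-1:ℝ) 1 ∧ y ∈ square := by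
  constructor
  · intro hx
    refine ⟨by simpa using hx i, fun j => by simpa using hx (i.succAbove j)⟩
  · intro ⟨ht, hy⟩ j
    rcases eq_or_ne j i with h | h
    · subst h; simpa using ht
    · obtain ⟨j', rfl⟩ := Fin.exists_succAbove_eq h
      simpa using hy j'

lemma insertNth_mem_cubeCl {i : Fin 3} {t : ℝ} {y : Fin 2 → ℝ}
    (ht : t ∈ Icc (-1:ℝ) 1) (hy : ∀ j, y j ∈ Icc (-1:ℝ) 1) :
    Fin.insertNth i t y ∈ cubeCl := by
  intro j
  rcases eq_or_ne j i with h | h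
  · subst h; simpa using ht
  · obtain ⟨j', rfl⟩ := Fin.exists_succAbove_eq h
    simpa using hy j'

/-- The parametrized line in direction `i`. -/
lemma hasDerivAt_line {u : (Fin 3 → ℝ) → (Fin 3 → ℝ)} {i k : Fin 3} {y : Fin 2 → ℝ} {t : ℝ}
    (hx : DifferentiableAt ℝ u (Fin.insertNth i t y)) :
    HasDerivAt (fun s => u (Fin.insertNth i s y) k)
      (fderiv ℝ u (Fin.insertNth i t y) (Pi.single i 1) k) t := by
  have hline : ∀ s : ℝ, Fin.insertNth i s y
      = (Fin.insertNth i (0:ℝ) y : Fin 3 → ℝ) + s • (Pi.single i 1 : Fin 3 → ℝ) := by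
    intro s; funext j
    rcases eq_or_ne j i with h | h
    · subst h; simp
    · obtain ⟨j', rfl⟩ := Fin.exists_succAbove_eq h
      simp [Pi.single_eq_of_ne (Fin.succAbove_ne i j')]
  have hφ : HasDerivAt (fun s : ℝ => (Fin.insertNth i s y : Fin 3 → ℝ))
      (Pi.single i 1 : Fin 3 → ℝ) t := by
    have haff : HasDerivAt (fun s : ℝ => (Fin.insertNth i (0:ℝ) y : Fin 3 → ℝ)
        + s • (Pi.single i 1 : Fin 3 → ℝ)) (Pi.single i 1 : Fin 3 → ℝ) t := by
      simpa using ((hasDerivAt_id t).smul_const (Pi.single i 1 : Fin 3 → ℝ)).const_add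
        (Fin.insertNth i (0:ℝ) y : Fin 3 → ℝ)
    exact haff.congr_of_eventuallyEq (Filter.Eventually.of_forall hline)
  have hcomp := (hx.hasFDerivAt.comp_hasDerivAt t hφ)
  exact ((ContinuousLinearMap.proj k : (Fin 3 → ℝ) →L[ℝ] ℝ).hasFDerivAt.comp_hasDerivAt t hcomp)

/-- Constancy on the open interval extends to the boundary value at `1`. -/
lemma const_to_boundary {f : ℝ → ℝ} (hc : ContinuousOn f (Icc (-1:ℝ) 1))
    (hconst : ∀ s ∈ Ioo (-1:ℝ) 1, ∀ t ∈ Ioo (-1:ℝ) 1, f t = f s) :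
    ∀ t ∈ Ioo (-1:ℝ) 1, f t = f 1 := by
  intro t ht
  have h1 : ContinuousWithinAt f (Ioo (-1:ℝ) 1) 1 :=
    (hc.continuousWithinAt (by norm_num : (1:ℝ) ∈ Icc (-1:ℝ) 1)).mono Ioo_subset_Icc_self
  have hne : (nhdsWithin (1:ℝ) (Ioo (-1:ℝ) 1)).NeBot := by
    rw [← mem_closure_iff_nhdsWithin_neBot, closure_Ioo (by norm_num : (-1:ℝ) ≠ 1)]
    norm_num
  have h2 : Filter.Tendsto f (nhdsWithin (1:ℝ) (Ioo (-1:ℝ) 1)) (nhds (f t)) := by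
    refine Filter.Tendsto.congr' ?_ tendsto_const_nhds
    filter_upwards [self_mem_nhdsWithin] with s hs
    exact (hconst t ht s hs).symm
  exact tendsto_nhds_unique h2 h1

lemma abs_le_bound {α c : ℝ} (hα : |α| ≤ 1)
    (h : ∀ᵐ s : ℝ, s ∈ Ioo (-1:ℝ) 1 → |c + 2*α*s| ≤ 2) : |c| ≤ 2*(1 - |α|) := by
  rw [abs_le]
  constructor
  · rw [neg_le]
    refine le_of_forall_pos_le_add (fun ε hε => ?_)
    set ε' := min (ε/2) 1 with hε'def
    have hε'0 : 0 < ε' := lt_min (by linarith) one_pos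
    have hε'1 : ε' ≤ 1 := min_le_right _ _
    have hε'2 : ε' ≤ ε/2 := min_le_left _ _
    have h3 : |α| * ε' ≤ ε' := mul_le_of_le_one_left hε'0.le hα
    rcases le_or_gt 0 α with hα0 | hα0
    · obtain ⟨s, hsI, hs⟩ := exists_good (Ioo_vol_ne (by linarith : (-1:ℝ) < -1 + ε')) h
      have hs2 := abs_le.1 (hs ⟨hsI.1, by linarith [hsI.2]⟩)
      have h4 : α * s ≤ -(|α| * (1 - ε')) := by
        rw [abs_of_nonneg hα0]
        nlinarith [mul_le_mul_of_nonneg_left (le_of_lt hsI.2) hα0]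
      linarith [hs2.1]
    · obtain ⟨s, hsI, hs⟩ := exists_good (Ioo_vol_ne (by linarith : (1:ℝ) - ε' < 1)) h
      have hs2 := abs_le.1 (hs ⟨by linarith [hsI.1], hsI.2⟩)
      have h4 : α * s ≤ -(|α| * (1 - ε')) := by
        rw [abs_of_neg hα0]
        nlinarith [mul_le_mul_of_nonpos_left (le_of_lt hsI.1) hα0.le]
      linarith [hs2.1]
  · refine le_of_forall_pos_le_add (fun ε hε => ?_)
    set ε' := min (ε/2) 1 with hε'def
    have hε'0 : 0 < ε' := lt_min (by linarith) one_pos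
    have hε'1 : ε' ≤ 1 := min_le_right _ _
    have hε'2 : ε' ≤ ε/2 := min_le_left _ _
    have h3 : |α| * ε' ≤ ε' := mul_le_of_le_one_left hε'0.le hα
    rcases le_or_gt 0 α with hα0 | hα0
    · obtain ⟨s, hsI, hs⟩ := exists_good (Ioo_vol_ne (by linarith : (1:ℝ) - ε' < 1)) h
      have hs2 := abs_le.1 (hs ⟨by linarith [hsI.1], hsI.2⟩)
      have h4 : |α| * (1 - ε') ≤ α * s := by
        rw [abs_of_nonneg hα0]
        nlinarith [mul_le_mul_of_nonneg_left (le_of_lt hsI.1) hα0]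
      linarith [hs2.2]
    · obtain ⟨s, hsI, hs⟩ := exists_good (Ioo_vol_ne (by linarith : (-1:ℝ) < -1 + ε')) h
      have hs2 := abs_le.1 (hs ⟨hsI.1, by linarith [hsI.2]⟩)
      have h4 : |α| * (1 - ε') ≤ α * s := by
        rw [abs_of_neg hα0]
        nlinarith [mul_le_mul_of_nonpos_left (le_of_lt hsI.2) hα0.le]
      linarith [hs2.2]

/-- Derivative transfer along coordinate lines. -/
lemma hasDerivAt_of_eq {u : (Fin 3 → ℝ) → (Fin 3 → ℝ)}
    (hdiff : ∀ x ∈ cube, DifferentiableAt ℝ u x) {i k : Fin 3} {x : Fin 3 → ℝ}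
    (hx : x ∈ cube) {g : ℝ → ℝ}
    (heq : ∀ s ∈ Ioo (-1:ℝ) 1, u (Fin.insertNth i s (fun j => x (i.succAbove j))) k = g s) :
    HasDerivAt g (fderiv ℝ u x (Pi.single i 1) k) (x i) := by
  have hxx : Fin.insertNth i (x i) (fun j => x (i.succAbove j)) = x :=
    Fin.insertNth_self_removeNth i x
  have hline := hasDerivAt_line (u := u) (i := i) (k := k)
    (y := fun j => x (i.succAbove j)) (t := x i) (by rw [hxx]; exact hdiff x hx)
  rw [hxx] at hline
  refine HasDerivAt.congr_of_eventuallyEq hline ?_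
  filter_upwards [isOpen_Ioo.mem_nhds (hx i)] with s hs
  exact (heq s hs).symm

theorem stmt_5 (α : ℝ) (hα : α ∈ Icc (-1 : ℝ) 1)
    (u : (Fin 3 → ℝ) → (Fin 3 → ℝ))
    (hcont : ContinuousOn u cubeCl)
    (hdiff : ∀ x ∈ cube, DifferentiableAt ℝ u x)
    (hstrain : ∀ᵐ x : Fin 3 → ℝ, x ∈ cube →
      strain u 0 0 x = 0 ∧ strain u 1 1 x = 0 ∧ strain u 2 2 x = 0 ∧
      strain u 0 1 x = 0 ∧ strain u 0 2 x = 0 ∧ |strain u 1 2 x| ≤ 1)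
    (hbc : ∀ x₁ ∈ Icc (-1 : ℝ) 1, ∀ x₂ ∈ Icc (-1 : ℝ) 1,
      u ![x₁, x₂, 1] 2 = α * x₁ * x₂ ∧ u ![x₁, x₂, -1] 2 = α * x₁ * x₂) :
    ∃ (c d : ℝ) (ψ : ℝ → ℝ),
      LipschitzOnWith (Real.toNNReal (2 * (1 - |α|))) ψ (Ioo (-1 : ℝ) 1) ∧
      ∀ x ∈ cube,
        u x = ![-(α * x 1 * x 2) + d * x 1 + c,
                α * x 0 * x 2 - d * x 0 + ψ (x 2),
                α * x 0 * x 1] := by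
  obtain ⟨hαl, hαu⟩ := hα
  have hαabs : |α| ≤ 1 := abs_le.2 ⟨hαl, hαu⟩
  have h0I : (0:ℝ) ∈ Ioo (-1:ℝ) 1 := by norm_num
  -- basic continuity
  have hUcont : ∀ x ∈ cube, ContinuousAt u x := fun x hx => (hdiff x hx).continuousAt
  have hcomp : ∀ (k : Fin 3), ∀ x ∈ cube, ContinuousAt (fun z => u z k) x :=
    fun k x hx => (continuous_apply k).continuousAt.comp (hUcont x hx)
  -- concrete insertNth values
  have ins0 : ∀ (t : ℝ) (y : Fin 2 → ℝ),
      Fin.insertNth (0:Fin 3) t y = ![t, y 0, y 1] := by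
    intro t y; funext j; fin_cases j <;> rfl
  have ins1 : ∀ (t : ℝ) (y : Fin 2 → ℝ),
      Fin.insertNth (1:Fin 3) t y = ![y 0, t, y 1] := by
    intro t y; funext j; fin_cases j <;> rfl
  have ins2 : ∀ (t : ℝ) (y : Fin 2 → ℝ),
      Fin.insertNth (2:Fin 3) t y = ![y 0, y 1, t] := by
    intro t y; funext j; fin_cases j <;> rfl
  have eta3 : ∀ x : Fin 3 → ℝ, x = ![x 0, x 1, x 2] := by
    intro x; funext j; fin_cases j <;> rfl
  -- cleaned a.e. strain facts
  have hst' : ∀ᵐ x : Fin 3 → ℝ, x ∈ cube →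
      (fderiv ℝ u x (Pi.single 0 1) 0 = 0 ∧ fderiv ℝ u x (Pi.single 1 1) 1 = 0 ∧
       fderiv ℝ u x (Pi.single 2 1) 2 = 0 ∧
       fderiv ℝ u x (Pi.single 1 1) 0 + fderiv ℝ u x (Pi.single 0 1) 1 = 0 ∧
       fderiv ℝ u x (Pi.single 2 1) 0 + fderiv ℝ u x (Pi.single 0 1) 2 = 0 ∧
       |fderiv ℝ u x (Pi.single 2 1) 1 + fderiv ℝ u x (Pi.single 1 1) 2| ≤ 2) := by
    filter_upwards [hstrain] with x hst hx
    obtain ⟨h1, h2, h3, h4, h5, h6⟩ := hst hx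
    simp only [strain] at h1 h2 h3 h4 h5 h6
    rw [abs_le] at h6
    refine ⟨by linarith, by linarith, by linarith, by linarith, by linarith, ?_⟩
    rw [abs_le]; constructor <;> linarith [h6.1, h6.2]
  -- Step A : u x 2 = α x0 x1 on cube
  have stepA : ∀ x ∈ cube, u x 2 = α * x 0 * x 1 := by
    refine eqOn_of_ae (μ := volume) isOpen_cube (hcomp 2)
      (fun x _ => (((continuous_const.mul (continuous_apply 0)).mul
        (continuous_apply 1))).continuousAt) ?_
    refine unslice3 2 ?_
    filter_upwards [slice3 2 hst'] with y hy
    intro t hmem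
    obtain ⟨htI, hysq⟩ := insertNth_mem_cube.1 hmem
    set f : ℝ → ℝ := fun s => u (Fin.insertNth (2:Fin 3) s y) 2 with hfdef
    have hdf : ∀ s ∈ Ioo (-1:ℝ) 1, HasDerivAt f (deriv f s) s := by
      intro s hs
      have h := hasDerivAt_line (u := u) (i := 2) (k := 2) (y := y) (t := s)
        (hdiff _ (insertNth_mem_cube.2 ⟨hs, hysq⟩))
      exact h.deriv ▸ h
    have hae : ∀ᵐ s : ℝ, s ∈ Ioo (-1:ℝ) 1 → deriv f s = 0 := by
      filter_upwards [hy] with s hsP hs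
      have hc := (hsP (insertNth_mem_cube.2 ⟨hs, hysq⟩)).2.2.1
      have h := hasDerivAt_line (u := u) (i := 2) (k := 2) (y := y) (t := s)
        (hdiff _ (insertNth_mem_cube.2 ⟨hs, hysq⟩))
      rw [h.deriv]; exact hc
    have hconst := const_of_deriv_ae hdf hae
    have hfc : ContinuousOn f (Icc (-1:ℝ) 1) := by
      have hmap : MapsTo (fun s : ℝ => Fin.insertNth (2:Fin 3) s y) (Icc (-1:ℝ) 1) cubeCl :=
        fun s hs => insertNth_mem_cubeCl hs (fun j => Ioo_subset_Icc_self (hysq j))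
      exact (continuous_apply (2:Fin 3)).comp_continuousOn
        (hcont.comp (Continuous.finInsertNth (A := fun _ : Fin 3 => ℝ) 2
          continuous_id continuous_const).continuousOn hmap)
    have hbval : f 1 = α * y 0 * y 1 := by
      have := (hbc (y 0) (Ioo_subset_Icc_self (hysq 0)) (y 1)
        (Ioo_subset_Icc_self (hysq 1))).1
      rw [hfdef]; simp only [ins2]; exact this
    have hconst' : ∀ s ∈ Ioo (-1:ℝ) 1, ∀ r ∈ Ioo (-1:ℝ) 1, f r = f s := by
      intro s hs r hr
      have := hconst s hs r hr; simpa using this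
    have hft := const_to_boundary hfc hconst' t htI
    have hg : u (Fin.insertNth (2:Fin 3) t y) 2 = α * y 0 * y 1 := hft.trans hbval
    simpa [ins2] using hg
  -- Step A' : derivatives of the third component
  have lineD1 : ∀ x ∈ cube, fderiv ℝ u x (Pi.single 1 1) 2 = α * x 0 := by
    intro x hx
    have heq : ∀ s ∈ Ioo (-1:ℝ) 1,
        u (Fin.insertNth (1:Fin 3) s (fun j => x ((1:Fin 3).succAbove j))) 2
          = α * x 0 * s := by
      intro s hs
      have hmem : Fin.insertNth (1:Fin 3) s (fun j => x ((1:Fin 3).succAbove j)) ∈ cube :=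
        insertNth_mem_cube.2 ⟨hs, fun j => hx _⟩
      rw [stepA _ hmem]
      simp [ins1]
    have h := hasDerivAt_of_eq hdiff hx heq
    have h2 : HasDerivAt (fun s => α * x 0 * s) (α * x 0) (x 1) := by
      simpa using (hasDerivAt_id (x 1)).const_mul (α * x 0)
    exact h.unique h2
  have lineD0 : ∀ x ∈ cube, fderiv ℝ u x (Pi.single 0 1) 2 = α * x 1 := by
    intro x hx
    have heq : ∀ s ∈ Ioo (-1:ℝ) 1,
        u (Fin.insertNth (0:Fin 3) s (fun j => x ((0:Fin 3).succAbove j))) 2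
          = α * x 1 * s := by
      intro s hs
      have hmem : Fin.insertNth (0:Fin 3) s (fun j => x ((0:Fin 3).succAbove j)) ∈ cube :=
        insertNth_mem_cube.2 ⟨hs, fun j => hx _⟩
      rw [stepA _ hmem]
      simp [ins0]
      ring
    have h := hasDerivAt_of_eq hdiff hx heq
    have h2 : HasDerivAt (fun s => α * x 1 * s) (α * x 1) (x 0) := by
      simpa using (hasDerivAt_id (x 0)).const_mul (α * x 1)
    exact h.unique h2
  -- succAbove computations
  have hsa0 : ((0:Fin 3).succAbove 0) = 1 ∧ ((0:Fin 3).succAbove 1) = 2 := ⟨rfl, rfl⟩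
  have hsa1 : ((1:Fin 3).succAbove 0) = 0 ∧ ((1:Fin 3).succAbove 1) = 2 := ⟨rfl, rfl⟩
  have hsa2 : ((2:Fin 3).succAbove 0) = 0 ∧ ((2:Fin 3).succAbove 1) = 1 := ⟨rfl, rfl⟩
  -- the modified displacement components
  set U₁ : (Fin 3 → ℝ) → ℝ := fun z => u z 0 + α * z 1 * z 2 with hU₁def
  set U₂ : (Fin 3 → ℝ) → ℝ := fun z => u z 1 - α * z 0 * z 2 with hU₂def
  have hU₁cont : ∀ z ∈ cube, ContinuousAt U₁ z := fun z hz =>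
    (hcomp 0 z hz).add (((continuous_const.mul (continuous_apply 1)).mul
      (continuous_apply 2)).continuousAt)
  have hU₂cont : ∀ z ∈ cube, ContinuousAt U₂ z := fun z hz =>
    (hcomp 1 z hz).sub (((continuous_const.mul (continuous_apply 0)).mul
      (continuous_apply 2)).continuousAt)
  -- line derivatives of U₁, U₂
  have lineU₁0 : ∀ (y : Fin 2 → ℝ), y ∈ square → ∀ s ∈ Ioo (-1:ℝ) 1,
      HasDerivAt (fun r => U₁ (Fin.insertNth (0:Fin 3) r y))
        (fderiv ℝ u (Fin.insertNth (0:Fin 3) s y) (Pi.single 0 1) 0) s := by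
    intro y hysq s hs
    have h := hasDerivAt_line (u := u) (i := 0) (k := 0) (y := y) (t := s)
      (hdiff _ (insertNth_mem_cube.2 ⟨hs, hysq⟩))
    refine (h.add_const (α * y 0 * y 1)).congr_of_eventuallyEq
      (Filter.Eventually.of_forall fun r => ?_)
    simp [hU₁def, ins0]
    try ring
  have lineU₁2 : ∀ (y : Fin 2 → ℝ), y ∈ square → ∀ s ∈ Ioo (-1:ℝ) 1,
      HasDerivAt (fun r => U₁ (Fin.insertNth (2:Fin 3) r y))
        (fderiv ℝ u (Fin.insertNth (2:Fin 3) s y) (Pi.single 2 1) 0 + α * y 1) s := by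
    intro y hysq s hs
    have h := hasDerivAt_line (u := u) (i := 2) (k := 0) (y := y) (t := s)
      (hdiff _ (insertNth_mem_cube.2 ⟨hs, hysq⟩))
    have h2 := h.add (((hasDerivAt_id s).const_mul (α * y 1)))
    have h3 : HasDerivAt (fun r => u (Fin.insertNth (2:Fin 3) r y) 0 + α * y 1 * r)
        (fderiv ℝ u (Fin.insertNth (2:Fin 3) s y) (Pi.single 2 1) 0 + α * y 1) s := by
      exact (h2.congr_of_eventuallyEq (Filter.Eventually.of_forall fun r => rfl)).congr_deriv (by ring)
    refine h3.congr_of_eventuallyEq (Filter.Eventually.of_forall fun r => ?_)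
    simp [hU₁def, ins2]
    try ring
  have lineU₂1 : ∀ (y : Fin 2 → ℝ), y ∈ square → ∀ s ∈ Ioo (-1:ℝ) 1,
      HasDerivAt (fun r => U₂ (Fin.insertNth (1:Fin 3) r y))
        (fderiv ℝ u (Fin.insertNth (1:Fin 3) s y) (Pi.single 1 1) 1) s := by
    intro y hysq s hs
    have h := hasDerivAt_line (u := u) (i := 1) (k := 1) (y := y) (t := s)
      (hdiff _ (insertNth_mem_cube.2 ⟨hs, hysq⟩))
    refine (h.sub_const (α * y 0 * y 1)).congr_of_eventuallyEq
      (Filter.Eventually.of_forall fun r => ?_)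
    simp [hU₂def, ins1]
    try ring
  -- constancy of U₁ in directions 0 and 2, of U₂ in direction 1
  have hC1 : ∀ s ∈ Ioo (-1:ℝ) 1, ∀ s' ∈ Ioo (-1:ℝ) 1, ∀ y ∈ square,
      U₁ (Fin.insertNth (0:Fin 3) s' y) = U₁ (Fin.insertNth (0:Fin 3) s y) := by
    intro s hs s' hs'
    refine eqOn_of_ae (μ := volume) isOpen_square
      (fun y hy => (hU₁cont _ (insertNth_mem_cube.2 ⟨hs', hy⟩)).comp
        (Continuous.finInsertNth (A := fun _ : Fin 3 => ℝ) 0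
          continuous_const continuous_id).continuousAt)
      (fun y hy => (hU₁cont _ (insertNth_mem_cube.2 ⟨hs, hy⟩)).comp
        (Continuous.finInsertNth (A := fun _ : Fin 3 => ℝ) 0
          continuous_const continuous_id).continuousAt) ?_
    filter_upwards [slice3 0 hst'] with y hy hysq
    have hdf : ∀ r ∈ Ioo (-1:ℝ) 1, HasDerivAt (fun r => U₁ (Fin.insertNth (0:Fin 3) r y))
        (deriv (fun r => U₁ (Fin.insertNth (0:Fin 3) r y)) r) r :=
      fun r hr => (lineU₁0 y hysq r hr).deriv ▸ lineU₁0 y hysq r hr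
    have hae : ∀ᵐ r : ℝ, r ∈ Ioo (-1:ℝ) 1 →
        deriv (fun r => U₁ (Fin.insertNth (0:Fin 3) r y)) r = 0 := by
      filter_upwards [hy] with r hrP hr
      rw [(lineU₁0 y hysq r hr).deriv]
      exact (hrP (insertNth_mem_cube.2 ⟨hr, hysq⟩)).1
    simpa using const_of_deriv_ae hdf hae s hs s' hs'
  have hC2 : ∀ s ∈ Ioo (-1:ℝ) 1, ∀ s' ∈ Ioo (-1:ℝ) 1, ∀ y ∈ square,
      U₁ (Fin.insertNth (2:Fin 3) s' y) = U₁ (Fin.insertNth (2:Fin 3) s y) := by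
    intro s hs s' hs'
    refine eqOn_of_ae (μ := volume) isOpen_square
      (fun y hy => (hU₁cont _ (insertNth_mem_cube.2 ⟨hs', hy⟩)).comp
        (Continuous.finInsertNth (A := fun _ : Fin 3 => ℝ) 2
          continuous_const continuous_id).continuousAt)
      (fun y hy => (hU₁cont _ (insertNth_mem_cube.2 ⟨hs, hy⟩)).comp
        (Continuous.finInsertNth (A := fun _ : Fin 3 => ℝ) 2
          continuous_const continuous_id).continuousAt) ?_
    filter_upwards [slice3 2 hst'] with y hy hysq
    have hdf : ∀ r ∈ Ioo (-1:ℝ) 1, HasDerivAt (fun r => U₁ (Fin.insertNth (2:Fin 3) r y))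
        (deriv (fun r => U₁ (Fin.insertNth (2:Fin 3) r y)) r) r :=
      fun r hr => (lineU₁2 y hysq r hr).deriv ▸ lineU₁2 y hysq r hr
    have hae : ∀ᵐ r : ℝ, r ∈ Ioo (-1:ℝ) 1 →
        deriv (fun r => U₁ (Fin.insertNth (2:Fin 3) r y)) r = 0 := by
      filter_upwards [hy] with r hrP hr
      have hmem : Fin.insertNth (2:Fin 3) r y ∈ cube := insertNth_mem_cube.2 ⟨hr, hysq⟩
      rw [(lineU₁2 y hysq r hr).deriv]
      have h5 := (hrP hmem).2.2.2.2.1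
      have hD02 := lineD0 _ hmem
      have hpt1 : (Fin.insertNth (2:Fin 3) r y : Fin 3 → ℝ) 1 = y 1 := by rw [ins2]; rfl
      rw [hpt1] at hD02
      linarith
    simpa using const_of_deriv_ae hdf hae s hs s' hs'
  have hC3 : ∀ s ∈ Ioo (-1:ℝ) 1, ∀ s' ∈ Ioo (-1:ℝ) 1, ∀ y ∈ square,
      U₂ (Fin.insertNth (1:Fin 3) s' y) = U₂ (Fin.insertNth (1:Fin 3) s y) := by
    intro s hs s' hs'
    refine eqOn_of_ae (μ := volume) isOpen_square
      (fun y hy => (hU₂cont _ (insertNth_mem_cube.2 ⟨hs', hy⟩)).comp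
        (Continuous.finInsertNth (A := fun _ : Fin 3 => ℝ) 1
          continuous_const continuous_id).continuousAt)
      (fun y hy => (hU₂cont _ (insertNth_mem_cube.2 ⟨hs, hy⟩)).comp
        (Continuous.finInsertNth (A := fun _ : Fin 3 => ℝ) 1
          continuous_const continuous_id).continuousAt) ?_
    filter_upwards [slice3 1 hst'] with y hy hysq
    have hdf : ∀ r ∈ Ioo (-1:ℝ) 1, HasDerivAt (fun r => U₂ (Fin.insertNth (1:Fin 3) r y))
        (deriv (fun r => U₂ (Fin.insertNth (1:Fin 3) r y)) r) r :=
      fun r hr => (lineU₂1 y hysq r hr).deriv ▸ lineU₂1 y hysq r hr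
    have hae : ∀ᵐ r : ℝ, r ∈ Ioo (-1:ℝ) 1 →
        deriv (fun r => U₂ (Fin.insertNth (1:Fin 3) r y)) r = 0 := by
      filter_upwards [hy] with r hrP hr
      rw [(lineU₂1 y hysq r hr).deriv]
      exact (hrP (insertNth_mem_cube.2 ⟨hr, hysq⟩)).2.1
    simpa using const_of_deriv_ae hdf hae s hs s' hs'
  -- profiles
  set F : ℝ → ℝ := fun r => U₁ ![0, r, 0] with hFdef
  set G : ℝ → ℝ → ℝ := fun a c => U₂ ![a, 0, c] with hGdef
  have sqmem : ∀ a b : ℝ, a ∈ Ioo (-1:ℝ) 1 → b ∈ Ioo (-1:ℝ) 1 →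
      (![a, b] : Fin 2 → ℝ) ∈ square := by
    intro a b ha hb j
    fin_cases j
    · simpa using ha
    · simpa using hb
  have hU₁eq : ∀ x ∈ cube, U₁ x = F (x 1) := by
    intro x hx
    have e1 := hC1 (x 0) (hx 0) 0 h0I ![x 1, x 2] (sqmem _ _ (hx 1) (hx 2))
    rw [ins0, ins0] at e1
    have e2 := hC2 (x 2) (hx 2) 0 h0I ![0, x 1] (sqmem _ _ h0I (hx 1))
    rw [ins2, ins2] at e2
    simp only [Matrix.cons_val_zero, Matrix.cons_val_one, Matrix.head_cons] at e1 e2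
    calc U₁ x = U₁ ![x 0, x 1, x 2] := by rw [← eta3 x]
      _ = U₁ ![0, x 1, x 2] := e1.symm
      _ = U₁ ![0, x 1, 0] := e2.symm
      _ = F (x 1) := rfl
  have hU₂eq : ∀ x ∈ cube, U₂ x = G (x 0) (x 2) := by
    intro x hx
    have e1 := hC3 (x 1) (hx 1) 0 h0I ![x 0, x 2] (sqmem _ _ (hx 0) (hx 2))
    rw [ins1, ins1] at e1
    simp only [Matrix.cons_val_zero, Matrix.cons_val_one, Matrix.head_cons] at e1
    calc U₂ x = U₂ ![x 0, x 1, x 2] := by rw [← eta3 x]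
      _ = U₂ ![x 0, 0, x 2] := e1.symm
      _ = G (x 0) (x 2) := rfl
  have cubemem : ∀ a b c' : ℝ, a ∈ Ioo (-1:ℝ) 1 → b ∈ Ioo (-1:ℝ) 1 → c' ∈ Ioo (-1:ℝ) 1 →
      (![a, b, c'] : Fin 3 → ℝ) ∈ cube := by
    intro a b c' ha hb hc j
    fin_cases j
    · simpa using ha
    · simpa using hb
    · simpa using hc
  -- derivative of the profile F
  have hFd : ∀ x ∈ cube, HasDerivAt F (fderiv ℝ u x (Pi.single 1 1) 0 + α * x 2) (x 1) := by
    intro x hx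
    have hpt : ∀ s : ℝ, Fin.insertNth (1:Fin 3) s (fun j => x ((1:Fin 3).succAbove j))
        = ![x 0, s, x 2] := by
      intro s; rw [ins1]; simp [hsa1.1, hsa1.2]
    have heq : ∀ s ∈ Ioo (-1:ℝ) 1,
        u (Fin.insertNth (1:Fin 3) s (fun j => x ((1:Fin 3).succAbove j))) 0
          = F s - α * s * x 2 := by
      intro s hs
      have hmem : (![x 0, s, x 2] : Fin 3 → ℝ) ∈ cube := cubemem _ _ _ (hx 0) hs (hx 2)
      have h1 := hU₁eq _ hmem
      simp only [hU₁def] at h1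
      simp only [Matrix.cons_val_zero, Matrix.cons_val_one, Matrix.head_cons] at h1
      rw [hpt s]
      have h2 : (![x 0, s, x 2] : Fin 3 → ℝ) 2 = x 2 := rfl
      rw [h2] at h1
      linarith
    have hg := hasDerivAt_of_eq hdiff hx heq
    have h2 := hg.add ((hasDerivAt_id (x 1)).const_mul (α * x 2))
    have h3 := h2.congr_of_eventuallyEq
      (Filter.Eventually.of_forall (fun s : ℝ => by ring : ∀ s : ℝ,
        F s = F s - α * s * x 2 + α * x 2 * s))
    simpa using h3
  -- derivative of G in the first variable
  have hGd : ∀ x ∈ cube, HasDerivAt (fun a => G a (x 2))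
      (fderiv ℝ u x (Pi.single 0 1) 1 - α * x 2) (x 0) := by
    intro x hx
    have hpt : ∀ s : ℝ, Fin.insertNth (0:Fin 3) s (fun j => x ((0:Fin 3).succAbove j))
        = ![s, x 1, x 2] := by
      intro s; rw [ins0]; simp [hsa0.1, hsa0.2]
    have heq : ∀ s ∈ Ioo (-1:ℝ) 1,
        u (Fin.insertNth (0:Fin 3) s (fun j => x ((0:Fin 3).succAbove j))) 1
          = G s (x 2) + α * s * x 2 := by
      intro s hs
      have hmem : (![s, x 1, x 2] : Fin 3 → ℝ) ∈ cube := cubemem _ _ _ hs (hx 1) (hx 2)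
      have h1 := hU₂eq _ hmem
      simp only [hU₂def] at h1
      simp only [Matrix.cons_val_zero, Matrix.cons_val_one, Matrix.head_cons] at h1
      rw [hpt s]
      have h2 : (![s, x 1, x 2] : Fin 3 → ℝ) 2 = x 2 := rfl
      rw [h2] at h1
      linarith
    have hg := hasDerivAt_of_eq hdiff hx heq
    have h2 := hg.sub ((hasDerivAt_id (x 0)).const_mul (α * x 2))
    have h3 := h2.congr_of_eventuallyEq
      (Filter.Eventually.of_forall (fun s : ℝ => by ring : ∀ s : ℝ,
        G s (x 2) = G s (x 2) + α * s * x 2 - α * x 2 * s))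
    simpa using h3
  -- derivative of G in the second variable
  have hψd' : ∀ x ∈ cube, HasDerivAt (fun r => G (x 0) r)
      (fderiv ℝ u x (Pi.single 2 1) 1 - α * x 0) (x 2) := by
    intro x hx
    have hpt : ∀ s : ℝ, Fin.insertNth (2:Fin 3) s (fun j => x ((2:Fin 3).succAbove j))
        = ![x 0, x 1, s] := by
      intro s; rw [ins2]; simp [hsa2.1, hsa2.2]
    have heq : ∀ s ∈ Ioo (-1:ℝ) 1,
        u (Fin.insertNth (2:Fin 3) s (fun j => x ((2:Fin 3).succAbove j))) 1
          = G (x 0) s + α * x 0 * s := by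
      intro s hs
      have hmem : (![x 0, x 1, s] : Fin 3 → ℝ) ∈ cube := cubemem _ _ _ (hx 0) (hx 1) hs
      have h1 := hU₂eq _ hmem
      simp only [hU₂def] at h1
      simp only [Matrix.cons_val_zero, Matrix.cons_val_one, Matrix.head_cons] at h1
      rw [hpt s]
      have h2 : (![x 0, x 1, s] : Fin 3 → ℝ) 2 = s := rfl
      rw [h2] at h1
      linarith
    have hg := hasDerivAt_of_eq hdiff hx heq
    have h2 := hg.sub ((hasDerivAt_id (x 2)).const_mul (α * x 0))
    have h3 := h2.congr_of_eventuallyEq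
      (Filter.Eventually.of_forall (fun s : ℝ => by ring : ∀ s : ℝ,
        G (x 0) s = G (x 0) s + α * x 0 * s - α * x 0 * s))
    simpa using h3
  -- the rotation constant d
  have hdae : ∀ᵐ x : Fin 3 → ℝ, x ∈ cube →
      deriv F (x 1) + deriv (fun a => G a (x 2)) (x 0) = 0 := by
    filter_upwards [hst'] with x hst hx
    rw [(hFd x hx).deriv, (hGd x hx).deriv]
    have h4 := (hst hx).2.2.2.1
    linarith
  obtain ⟨y₀, hy₀sq, hy₀⟩ := exists_good square_vol_ne (slice3 1 hdae)
  set d : ℝ := -(deriv (fun a => G a (y₀ 1)) (y₀ 0)) with hddef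
  have hFd' : ∀ᵐ t : ℝ, t ∈ Ioo (-1:ℝ) 1 → deriv F t = d := by
    filter_upwards [hy₀] with t ht htI
    have h := ht (insertNth_mem_cube.2 ⟨htI, hy₀sq⟩)
    have hc0 : (Fin.insertNth (1:Fin 3) t y₀ : Fin 3 → ℝ) 0 = y₀ 0 := by rw [ins1]; rfl
    have hc1 : (Fin.insertNth (1:Fin 3) t y₀ : Fin 3 → ℝ) 1 = t := by rw [ins1]; rfl
    have hc2 : (Fin.insertNth (1:Fin 3) t y₀ : Fin 3 → ℝ) 2 = y₀ 1 := by rw [ins1]; rfl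
    rw [hc0, hc1, hc2] at h
    rw [hddef]
    linarith
  have hFderiv : ∀ r ∈ Ioo (-1:ℝ) 1, HasDerivAt F (deriv F r) r := by
    intro r hr
    have hmem : Fin.insertNth (1:Fin 3) r y₀ ∈ cube := insertNth_mem_cube.2 ⟨hr, hy₀sq⟩
    have h := hFd _ hmem
    have hc1 : (Fin.insertNth (1:Fin 3) r y₀ : Fin 3 → ℝ) 1 = r := by rw [ins1]; rfl
    rw [hc1] at h
    exact h.deriv ▸ h
  have hF : ∀ t ∈ Ioo (-1:ℝ) 1, F t = F 0 + d * t := by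
    intro t ht
    simpa using const_of_deriv_ae hFderiv hFd' 0 h0I t ht
  -- G is affine in its first variable with slope -d
  have hGa : ∀ᵐ y : Fin 2 → ℝ, y ∈ square → deriv (fun a => G a (y 1)) (y 0) = -d := by
    filter_upwards [slice3 1 hdae] with y hy hysq
    obtain ⟨t, htI, hP⟩ := exists_good (Ioo_vol_ne (by norm_num : (-1:ℝ) < 1)) (hy.and hFd')
    have h := hP.1 (insertNth_mem_cube.2 ⟨htI, hysq⟩)
    have hc0 : (Fin.insertNth (1:Fin 3) t y : Fin 3 → ℝ) 0 = y 0 := by rw [ins1]; rfl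
    have hc1 : (Fin.insertNth (1:Fin 3) t y : Fin 3 → ℝ) 1 = t := by rw [ins1]; rfl
    have hc2 : (Fin.insertNth (1:Fin 3) t y : Fin 3 → ℝ) 2 = y 1 := by rw [ins1]; rfl
    rw [hc0, hc1, hc2] at h
    rw [hP.2 htI] at h
    linarith
  have hGb : ∀ᵐ b : ℝ, b ∈ Ioo (-1:ℝ) 1 → ∀ a ∈ Ioo (-1:ℝ) 1,
      G a b = G 0 b + -d * (a - 0) := by
    filter_upwards [slice2 hGa] with b hb hbI
    have hdG : ∀ a ∈ Ioo (-1:ℝ) 1,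
        HasDerivAt (fun a' => G a' b) (deriv (fun a' => G a' b) a) a := by
      intro a haI
      have h := hGd _ (cubemem a 0 b haI h0I hbI)
      exact h.deriv ▸ h
    have hae2 : ∀ᵐ a : ℝ, a ∈ Ioo (-1:ℝ) 1 → deriv (fun a' => G a' b) a = -d := by
      filter_upwards [hb] with a ha haI
      exact ha (sqmem a b haI hbI)
    exact fun a haI => const_of_deriv_ae hdG hae2 0 h0I a haI
  have hGcont2 : ∀ a ∈ Ioo (-1:ℝ) 1, ∀ b ∈ Ioo (-1:ℝ) 1, ContinuousAt (fun r => G a r) b := by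
    intro a haI b hbI
    have hc : Continuous (fun r : ℝ => (![a, 0, r] : Fin 3 → ℝ)) := by
      have hcc := Continuous.finInsertNth (A := fun _ : Fin 3 => ℝ) 2
        (continuous_id) (continuous_const (y := (![a, 0] : Fin 2 → ℝ)))
      have heq : (fun r : ℝ => (![a, 0, r] : Fin 3 → ℝ))
          = fun r => (Fin.insertNth (2:Fin 3) r ![a, 0] : Fin 3 → ℝ) := by
        funext r; rw [ins2]; rfl
      rw [heq]; exact hcc
    have hca := ContinuousAt.comp (x := b)
      (hU₂cont (![a, 0, b]) (cubemem a 0 b haI h0I hbI)) hc.continuousAt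
    exact hca
  have hG2 : ∀ a ∈ Ioo (-1:ℝ) 1, ∀ b ∈ Ioo (-1:ℝ) 1, G a b = G 0 b - d * a := by
    intro a haI
    refine eqOn_of_ae (μ := volume) isOpen_Ioo
      (f := fun b => G a b) (g := fun b => G 0 b - d * a)
      (fun b hbI => hGcont2 a haI b hbI)
      (fun b hbI => (hGcont2 0 h0I b hbI).sub continuousAt_const) ?_
    filter_upwards [hGb] with b hb hbI
    rw [hb hbI a haI]; ring
  -- the profile ψ = G 0 ·
  have hψd : ∀ x ∈ cube, HasDerivAt (fun r => G 0 r)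
      (fderiv ℝ u x (Pi.single 2 1) 1 - α * x 0) (x 2) := by
    intro x hx
    have h := hψd' x hx
    have h2 := h.add_const (d * x 0)
    have heq : (fun r => G 0 r) =ᶠ[nhds (x 2)] (fun r => G (x 0) r + d * x 0) := by
      filter_upwards [isOpen_Ioo.mem_nhds (hx 2)] with r hr
      rw [hG2 _ (hx 0) _ hr]; ring
    exact h2.congr_of_eventuallyEq heq
  have hψbd : ∀ᵐ x : Fin 3 → ℝ, x ∈ cube →
      |deriv (fun r => G 0 r) (x 2) + 2 * α * x 0| ≤ 2 := by
    filter_upwards [hst'] with x hst hx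
    rw [(hψd x hx).deriv]
    have h6 := (hst hx).2.2.2.2.2
    rw [lineD1 x hx] at h6
    have hre : fderiv ℝ u x (Pi.single 2 1) 1 - α * x 0 + 2 * α * x 0
        = fderiv ℝ u x (Pi.single 2 1) 1 + α * x 0 := by ring
    rw [hre]
    exact h6
  have hψb2 : ∀ᵐ y : Fin 2 → ℝ, y ∈ square →
      |deriv (fun r => G 0 r) (y 1) + 2 * α * y 0| ≤ 2 := by
    filter_upwards [slice3 1 hψbd] with y hy hysq
    obtain ⟨t, htI, hP⟩ := exists_good (Ioo_vol_ne (by norm_num : (-1:ℝ) < 1)) hy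
    have h := hP (insertNth_mem_cube.2 ⟨htI, hysq⟩)
    have hc0 : (Fin.insertNth (1:Fin 3) t y : Fin 3 → ℝ) 0 = y 0 := by rw [ins1]; rfl
    have hc2 : (Fin.insertNth (1:Fin 3) t y : Fin 3 → ℝ) 2 = y 1 := by rw [ins1]; rfl
    rwa [hc0, hc2] at h
  have hψLip_ae : ∀ᵐ b : ℝ, b ∈ Ioo (-1:ℝ) 1 →
      |deriv (fun r => G 0 r) b| ≤ 2 * (1 - |α|) := by
    filter_upwards [slice2 hψb2] with b hb hbI
    refine abs_le_bound hαabs ?_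
    filter_upwards [hb] with a ha haI
    exact ha (sqmem a b haI hbI)
  have hψderiv : ∀ r ∈ Ioo (-1:ℝ) 1,
      HasDerivAt (fun r => G 0 r) (deriv (fun r => G 0 r) r) r := by
    intro r hr
    have h := hψd _ (cubemem 0 0 r h0I h0I hr)
    exact h.deriv ▸ h
  have hψlip := lip_of_deriv_ae hψderiv hψLip_ae
  -- conclusion
  refine ⟨F 0, d, fun r => G 0 r, ?_, ?_⟩
  · rw [lipschitzOnWith_iff_dist_le_mul]
    intro s hs t ht
    rw [Real.dist_eq, Real.dist_eq,
      Real.coe_toNNReal _ (by nlinarith [abs_nonneg α] : (0:ℝ) ≤ 2 * (1 - |α|))]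
    exact hψlip t ht s hs
  · intro x hx
    funext j
    have h1 := hU₁eq x hx
    simp only [hU₁def] at h1
    have h2 := hF (x 1) (hx 1)
    have h3 := hU₂eq x hx
    simp only [hU₂def] at h3
    have h4 := hG2 (x 0) (hx 0) (x 2) (hx 2)
    fin_cases j
    · show u x 0 = -(α * x 1 * x 2) + d * x 1 + F 0
      rw [h2] at h1
      linarith
    · show u x 1 = α * x 0 * x 2 - d * x 0 + G 0 (x 2)
      rw [h4] at h3
      linarith
    · show u x 2 = α * x 0 * x 1
      exact stepA x hx
end

section
/- There exists c > 0 such that for any f, g, h, k ∈ L²((−1,1)), setting δ := ∫_{(−1,1)²} |x f(y) + h(y) − y g(x) − k(x)|² dx dy, one can choose β, F, G ∈ ℝ such that ∫_{(−1,1)} |f(y) − βy − F|² dy + ∫_{(−1,1)} |g(x) − βx − G|² dx ≤ c δ. -/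
open MeasureTheory Set

private lemma my_cs {α : Type*} [MeasurableSpace α] {μ : Measure α} {u v : α → ℝ}
    (hu : MemLp u 2 μ) (hv : MemLp v 2 μ) :
    (∫ a, u a * v a ∂μ)^2 ≤ (∫ a, u a ^ 2 ∂μ) * (∫ a, v a ^ 2 ∂μ) := by
  have hpq : Real.HolderConjugate 2 2 := Real.holderConjugate_iff.mpr ⟨one_lt_two, by norm_num⟩
  have h2 : ENNReal.ofReal (2:ℝ) = 2 := by norm_num
  have hub : MemLp (fun a => |u a|) (ENNReal.ofReal (2:ℝ)) μ := by rw [h2]; exact hu.abs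
  have hvb : MemLp (fun a => |v a|) (ENNReal.ofReal (2:ℝ)) μ := by rw [h2]; exact hv.abs
  have key := integral_mul_le_Lp_mul_Lq_of_nonneg hpq
    (Filter.Eventually.of_forall fun a => abs_nonneg (u a))
    (Filter.Eventually.of_forall fun a => abs_nonneg (v a)) hub hvb
  have e1 : ∫ a, |u a| ^ (2:ℝ) ∂μ = ∫ a, u a ^ 2 ∂μ := by
    congr 1; funext a
    rw [show ((2:ℝ)) = ((2:ℕ):ℝ) by norm_num, Real.rpow_natCast, sq_abs]
  have e2 : ∫ a, |v a| ^ (2:ℝ) ∂μ = ∫ a, v a ^ 2 ∂μ := by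
    congr 1; funext a
    rw [show ((2:ℝ)) = ((2:ℕ):ℝ) by norm_num, Real.rpow_natCast, sq_abs]
  rw [e1, e2] at key
  have hIu : 0 ≤ ∫ a, u a ^ 2 ∂μ := integral_nonneg fun a => sq_nonneg _
  have hIv : 0 ≤ ∫ a, v a ^ 2 ∂μ := integral_nonneg fun a => sq_nonneg _
  have habs : |∫ a, u a * v a ∂μ| ≤ (∫ a, u a ^ 2 ∂μ) ^ ((1:ℝ)/2) * (∫ a, v a ^ 2 ∂μ) ^ ((1:ℝ)/2) := by
    calc |∫ a, u a * v a ∂μ| ≤ ∫ a, |u a| * |v a| ∂μ := by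
          simpa using norm_integral_le_integral_norm (fun a => u a * v a) (μ := μ)
      _ ≤ _ := key
  have hsq := pow_le_pow_left₀ (abs_nonneg _) habs 2
  rw [sq_abs] at hsq
  refine hsq.trans_eq ?_
  rw [mul_pow, ← Real.rpow_natCast ((∫ a, u a ^ 2 ∂μ) ^ ((1:ℝ)/2)) 2,
    ← Real.rpow_natCast ((∫ a, v a ^ 2 ∂μ) ^ ((1:ℝ)/2)) 2,
    ← Real.rpow_mul hIu, ← Real.rpow_mul hIv]
  norm_num

private lemma my_m1 : ∫ x in Ioo (-1:ℝ) 1, x = 0 := by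
  rw [← integral_Ioc_eq_integral_Ioo,
    ← intervalIntegral.integral_of_le (by norm_num : (-1:ℝ) ≤ 1)]
  rw [integral_id]; norm_num

private lemma my_m2 : ∫ x in Ioo (-1:ℝ) 1, x ^ 2 = 2/3 := by
  rw [← integral_Ioc_eq_integral_Ioo,
    ← intervalIntegral.integral_of_le (by norm_num : (-1:ℝ) ≤ 1)]
  rw [integral_pow]; norm_num

private lemma my_memLp_snd {μ : Measure ℝ} [IsFiniteMeasure μ] {f : ℝ → ℝ}
    (hf : MemLp f 2 μ) : MemLp (fun p : ℝ × ℝ => f p.2) 2 (μ.prod μ) := by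
  have h1 : MemLp f 2 ((μ Set.univ) • μ) := hf.smul_measure (measure_ne_top μ _)
  rw [← Measure.map_snd_prod] at h1
  exact (memLp_map_measure_iff h1.aestronglyMeasurable measurable_snd.aemeasurable).mp h1

private lemma my_memLp_fst {μ : Measure ℝ} [IsFiniteMeasure μ] {f : ℝ → ℝ}
    (hf : MemLp f 2 μ) : MemLp (fun p : ℝ × ℝ => f p.1) 2 (μ.prod μ) := by
  have h1 : MemLp f 2 ((μ Set.univ) • μ) := hf.smul_measure (measure_ne_top μ _)
  rw [← Measure.map_fst_prod] at h1
  exact (memLp_map_measure_iff h1.aestronglyMeasurable measurable_fst.aemeasurable).mp h1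

theorem stmt_7 :
    ∃ c : ℝ, 0 < c ∧
      ∀ f g h k : ℝ → ℝ,
        MemLp f 2 (volume.restrict (Ioo (-1 : ℝ) 1)) →
        MemLp g 2 (volume.restrict (Ioo (-1 : ℝ) 1)) →
        MemLp h 2 (volume.restrict (Ioo (-1 : ℝ) 1)) →
        MemLp k 2 (volume.restrict (Ioo (-1 : ℝ) 1)) →
        ∃ β F G : ℝ,
          (∫ y in Ioo (-1 : ℝ) 1, (f y - β * y - F) ^ 2) +
          (∫ x in Ioo (-1 : ℝ) 1, (g x - β * x - G) ^ 2) ≤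
          c * ∫ p in (Ioo (-1 : ℝ) 1) ×ˢ (Ioo (-1 : ℝ) 1),
                (p.1 * f p.2 + h p.2 - p.2 * g p.1 - k p.1) ^ 2 := by
  refine ⟨8, by norm_num, ?_⟩
  intro f g h k hf hg hh hk
  set μ : Measure ℝ := volume.restrict (Ioo (-1 : ℝ) 1) with hμdef
  haveI : IsFiniteMeasure μ := by
    constructor
    rw [hμdef, Measure.restrict_apply_univ, Real.volume_Ioo]
    exact ENNReal.ofReal_lt_top
  -- basic a.e. bound
  have hae : ∀ᵐ x ∂μ, |x| ≤ 1 := by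
    filter_upwards [ae_restrict_mem measurableSet_Ioo] with x hx
    exact abs_le.mpr ⟨hx.1.le, hx.2.le⟩
  -- Memℒp of the identity
  have hid : MemLp (fun x : ℝ => x) 2 μ := by
    refine (memLp_const (1:ℝ)).of_le measurable_id.aestronglyMeasurable ?_
    filter_upwards [hae] with x hx
    simpa using hx
  -- integrability facts
  have i_f : Integrable f μ := hf.integrable one_le_two
  have i_g : Integrable g μ := hg.integrable one_le_two
  have i_h : Integrable h μ := hh.integrable one_le_two
  have i_k : Integrable k μ := hk.integrable one_le_two
  have ixmul : ∀ (u : ℝ → ℝ), Integrable u μ → Integrable (fun x => x * u x) μ := by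
    intro u hu
    refine hu.abs.mono' (measurable_id.aestronglyMeasurable.mul hu.aestronglyMeasurable) ?_
    filter_upwards [hae] with x hx
    rw [norm_mul]
    calc ‖x‖ * ‖u x‖ ≤ 1 * ‖u x‖ := by
          exact mul_le_mul_of_nonneg_right hx (norm_nonneg _)
      _ = |u x| := by simp
  have ixg : Integrable (fun x => x * g x) μ := ixmul g i_g
  have ixk : Integrable (fun x => x * k x) μ := ixmul k i_k
  have ixf : Integrable (fun x => x * f x) μ := ixmul f i_f
  have ixh : Integrable (fun x => x * h x) μ := ixmul h i_h
  have iid : Integrable (fun x : ℝ => x) μ := hid.integrable one_le_two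
  have ix2 : Integrable (fun x : ℝ => x ^ 2) μ := hid.integrable_sq
  -- moments
  have m1 : ∫ x, x ∂μ = 0 := my_m1
  have m2 : ∫ x, x ^ 2 ∂μ = 2/3 := my_m2
  -- constants
  set A : ℝ := ∫ x, x * g x ∂μ with hA
  set B : ℝ := ∫ x, x * k x ∂μ with hB
  set C : ℝ := ∫ y, y * f y ∂μ with hC
  set D : ℝ := ∫ y, y * h y ∂μ with hD
  clear_value A B C D
  -- the error function on the product
  set E : ℝ × ℝ → ℝ := fun p => p.1 * f p.2 + h p.2 - p.2 * g p.1 - k p.1 with hE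
  clear_value E
  have haeP : ∀ᵐ p ∂(μ.prod μ), |p.1| ≤ 1 ∧ |p.2| ≤ 1 := by
    rw [hμdef, Measure.prod_restrict]
    filter_upwards [ae_restrict_mem (measurableSet_Ioo.prod measurableSet_Ioo)] with p hp
    exact ⟨abs_le.mpr ⟨hp.1.1.le, hp.1.2.le⟩, abs_le.mpr ⟨hp.2.1.le, hp.2.2.le⟩⟩
  have hfs : MemLp (fun p : ℝ × ℝ => f p.2) 2 (μ.prod μ) := my_memLp_snd hf
  have hhs : MemLp (fun p : ℝ × ℝ => h p.2) 2 (μ.prod μ) := my_memLp_snd hh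
  have hgs : MemLp (fun p : ℝ × ℝ => g p.1) 2 (μ.prod μ) := my_memLp_fst hg
  have hks : MemLp (fun p : ℝ × ℝ => k p.1) 2 (μ.prod μ) := my_memLp_fst hk
  have e1 : MemLp (fun p : ℝ × ℝ => p.1 * f p.2) 2 (μ.prod μ) := by
    refine hfs.of_le (measurable_fst.aestronglyMeasurable.mul hfs.aestronglyMeasurable) ?_
    filter_upwards [haeP] with p hp
    rw [norm_mul]
    calc ‖p.1‖ * ‖f p.2‖ ≤ 1 * ‖f p.2‖ :=
          mul_le_mul_of_nonneg_right hp.1 (norm_nonneg _)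
      _ = ‖f p.2‖ := one_mul _
  have e3 : MemLp (fun p : ℝ × ℝ => p.2 * g p.1) 2 (μ.prod μ) := by
    refine hgs.of_le (measurable_snd.aestronglyMeasurable.mul hgs.aestronglyMeasurable) ?_
    filter_upwards [haeP] with p hp
    rw [norm_mul]
    calc ‖p.2‖ * ‖g p.1‖ ≤ 1 * ‖g p.1‖ :=
          mul_le_mul_of_nonneg_right hp.2 (norm_nonneg _)
      _ = ‖g p.1‖ := one_mul _
  have hEL2 : MemLp E 2 (μ.prod μ) := by
    rw [hE]; exact ((e1.add hhs).sub e3).sub hks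
  have hE2 : Integrable (fun p => E p ^ 2) (μ.prod μ) := hEL2.integrable_sq
  obtain ⟨δ, hδ⟩ : ∃ d : ℝ, d = ∫ p, E p ^ 2 ∂(μ.prod μ) := ⟨_, rfl⟩
  have hδ0 : 0 ≤ δ := hδ ▸ integral_nonneg fun p => sq_nonneg _
  -- Fubini
  have hE2' : Integrable (Function.uncurry fun x y => E (x, y) ^ 2) (μ.prod μ) := hE2
  have fub1 : ∫ x, (∫ y, E (x, y) ^ 2 ∂μ) ∂μ = δ := by
    rw [hδ]; exact integral_integral hE2'
  have fub2 : ∫ y, (∫ x, E (x, y) ^ 2 ∂μ) ∂μ = δ := by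
    rw [hδ]; exact (integral_integral_swap hE2').symm.trans (integral_integral hE2')
  have ifub1 : Integrable (fun x => ∫ y, E (x, y) ^ 2 ∂μ) μ := hE2.integral_prod_left
  have ifub2 : Integrable (fun y => ∫ x, E (x, y) ^ 2 ∂μ) μ := hE2.integral_prod_right
  -- sections are in L²
  have hEy : ∀ y : ℝ, MemLp (fun x => E (x, y)) 2 μ := by
    intro y
    have : MemLp (fun x : ℝ => x * f y + h y - y * g x - k x) 2 μ := by
      have h1 : MemLp (fun x : ℝ => x * f y) 2 μ := by
        simpa [mul_comm] using hid.const_mul (f y)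
      exact ((h1.add (memLp_const (h y))).sub (hg.const_mul y)).sub hk
    simpa [hE] using this
  have hEx : ∀ x : ℝ, MemLp (fun y => E (x, y)) 2 μ := by
    intro x
    have : MemLp (fun y : ℝ => x * f y + h y - y * g x - k x) 2 μ := by
      have h3 : MemLp (fun y : ℝ => y * g x) 2 μ := by
        simpa [mul_comm] using hid.const_mul (g x)
      exact (((hf.const_mul x).add hh).sub h3).sub (memLp_const (k x))
    simpa [hE] using this
  -- key pointwise computation in y
  have keyf : ∀ y : ℝ, ∫ x, x * E (x, y) ∂μ = (2/3) * f y - A * y - B := by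
    intro y
    have hrw : (fun x => x * E (x, y)) =
        fun x => (x ^ 2 * f y + x * h y) - (y * (x * g x) + x * k x) := by
      funext x; simp only [hE]; ring
    have i1 : Integrable (fun x => x ^ 2 * f y) μ := ix2.mul_const (f y)
    have i2 : Integrable (fun x => x * h y) μ := iid.mul_const (h y)
    have i3 : Integrable (fun x => y * (x * g x)) μ := ixg.const_mul y
    have i12 : Integrable (fun x => x ^ 2 * f y + x * h y) μ := i1.add i2
    have i34 : Integrable (fun x => y * (x * g x) + x * k x) μ := i3.add ixk
    rw [hrw, integral_sub i12 i34, integral_add i1 i2, integral_add i3 ixk,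
      integral_mul_const, integral_mul_const, integral_const_mul, m1, m2]
    rw [← hA, ← hB]; ring
  -- key pointwise computation in x
  have keyg : ∀ x : ℝ, ∫ y, y * E (x, y) ∂μ = C * x + D - (2/3) * g x := by
    intro x
    have hrw : (fun y => y * E (x, y)) =
        fun y => (x * (y * f y) + y * h y) - (y ^ 2 * g x + y * k x) := by
      funext y; simp only [hE]; ring
    have i1 : Integrable (fun y => x * (y * f y)) μ := ixf.const_mul x
    have i3 : Integrable (fun y : ℝ => y ^ 2 * g x) μ := ix2.mul_const (g x)
    have i4 : Integrable (fun y : ℝ => y * k x) μ := iid.mul_const (k x)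
    have i12 : Integrable (fun y => x * (y * f y) + y * h y) μ := i1.add ixh
    have i34 : Integrable (fun y : ℝ => y ^ 2 * g x + y * k x) μ := i3.add i4
    rw [hrw, integral_sub i12 i34, integral_add i1 ixh, integral_add i3 i4,
      integral_const_mul, integral_mul_const, integral_mul_const, m1, m2]
    rw [← hC, ← hD]; ring
  -- Cauchy-Schwarz bounds on sections
  have csy : ∀ y : ℝ,
      (∫ x, x * E (x, y) ∂μ) ^ 2 ≤ (2/3) * ∫ x, E (x, y) ^ 2 ∂μ := by
    intro y
    have := my_cs hid (hEy y)
    rw [m2] at this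
    exact this
  have csx : ∀ x : ℝ,
      (∫ y, y * E (x, y) ∂μ) ^ 2 ≤ (2/3) * ∫ y, E (x, y) ^ 2 ∂μ := by
    intro x
    have := my_cs hid (hEx x)
    rw [m2] at this
    exact this
  -- choose the parameters
  refine ⟨(3/2) * A, (3/2) * B, (3/2) * D, ?_⟩
  -- bound for f
  have stepf : ∫ y, (f y - (3/2) * A * y - (3/2) * B) ^ 2 ∂μ ≤ (3/2) * δ := by
    have hle : ∀ y : ℝ, (f y - (3/2) * A * y - (3/2) * B) ^ 2 =
        (9/4) * (∫ x, x * E (x, y) ∂μ) ^ 2 := by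
      intro y
      rw [keyf y]; ring
    have hb : (∫ y, (f y - (3/2) * A * y - (3/2) * B) ^ 2 ∂μ) ≤
        ∫ y, (9/4) * ((2/3) * ∫ x, E (x, y) ^ 2 ∂μ) ∂μ := by
      refine integral_mono_of_nonneg (Filter.Eventually.of_forall fun y => sq_nonneg _)
        ((ifub2.const_mul (2/3)).const_mul (9/4)) ?_
      filter_upwards [] with y
      rw [hle y]
      exact mul_le_mul_of_nonneg_left (csy y) (by norm_num)
    refine hb.trans ?_
    rw [integral_const_mul, integral_const_mul, fub2]
    linarith
  -- the auxiliary function ψ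
  set ψ : ℝ → ℝ := fun x => C * x + D - (2/3) * g x with hψdef
  clear_value ψ
  have hψL2 : MemLp ψ 2 μ := by
    rw [hψdef]
    exact ((hid.const_mul C).add (memLp_const D)).sub (hg.const_mul (2/3))
  have hψeq : ∀ x, ψ x = ∫ y, y * E (x, y) ∂μ := by
    intro x; simp only [hψdef]; exact (keyg x).symm
  have hψsq : ∫ x, ψ x ^ 2 ∂μ ≤ (2/3) * δ := by
    have hb : ∫ x, ψ x ^ 2 ∂μ ≤ ∫ x, (2/3) * ∫ y, E (x, y) ^ 2 ∂μ ∂μ := by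
      refine integral_mono_of_nonneg (Filter.Eventually.of_forall fun x => sq_nonneg _)
        (ifub1.const_mul (2/3)) ?_
      filter_upwards [] with x
      rw [hψeq x]
      exact csx x
    refine hb.trans ?_
    rw [integral_const_mul, fub1]
  -- slope comparison
  have hxψ : ∫ x, x * ψ x ∂μ = (2/3) * C - (2/3) * A := by
    have hrw : (fun x => x * ψ x) =
        fun x => (x ^ 2 * C + x * D) - (2/3) * (x * g x) := by
      funext x; simp only [hψdef]; ring
    have i1 : Integrable (fun x : ℝ => x ^ 2 * C) μ := ix2.mul_const C
    have i2 : Integrable (fun x : ℝ => x * D) μ := iid.mul_const D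
    have i12 : Integrable (fun x : ℝ => x ^ 2 * C + x * D) μ := i1.add i2
    rw [hrw, integral_sub i12 (ixg.const_mul (2/3)), integral_add i1 i2,
      integral_mul_const, integral_mul_const, integral_const_mul, m1, m2, ← hA]
    ring
  have hslope : (C - A) ^ 2 ≤ δ := by
    have hcs := my_cs hid hψL2
    rw [m2, hxψ] at hcs
    have hexp : ((2:ℝ)/3 * C - 2/3 * A) ^ 2 = (4/9) * (C - A) ^ 2 := by ring
    rw [hexp] at hcs
    linarith [hψsq, hcs]
  -- bound for g
  have stepg : ∫ x, (g x - (3/2) * A * x - (3/2) * D) ^ 2 ∂μ ≤ 6 * δ := by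
    have hb : ∫ x, (g x - (3/2) * A * x - (3/2) * D) ^ 2 ∂μ ≤
        ∫ x, ((9/2) * ψ x ^ 2 + (9/2) * (C - A) ^ 2 * x ^ 2) ∂μ := by
      refine integral_mono_of_nonneg (Filter.Eventually.of_forall fun x => sq_nonneg _)
        ((hψL2.integrable_sq.const_mul (9/2)).add (ix2.const_mul ((9/2) * (C - A) ^ 2))) ?_
      filter_upwards [] with x
      have hgx : g x - (3/2) * A * x - (3/2) * D =
          -(3/2) * ψ x + (3/2) * (C - A) * x := by
        simp only [hψdef]; ring
      rw [hgx]
      have hid2 : (9:ℝ)/2 * ψ x ^ 2 + 9/2 * (C - A) ^ 2 * x ^ 2 -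
          (-(3/2) * ψ x + 3/2 * (C - A) * x) ^ 2 = 9/4 * (ψ x + (C - A) * x) ^ 2 := by
        ring
      linarith [sq_nonneg (ψ x + (C - A) * x), hid2]
    refine hb.trans ?_
    rw [integral_add (hψL2.integrable_sq.const_mul (9/2))
      (ix2.const_mul ((9/2) * (C - A) ^ 2)),
      integral_const_mul, integral_const_mul, m2]
    linarith [hψsq, hslope]
  -- put everything together
  have hmeas : (volume : Measure (ℝ × ℝ)).restrict
      ((Ioo (-1:ℝ) 1) ×ˢ (Ioo (-1:ℝ) 1)) = μ.prod μ := by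
    rw [hμdef, Measure.prod_restrict, ← Measure.volume_eq_prod]
  calc (∫ y, (f y - (3/2) * A * y - (3/2) * B) ^ 2 ∂μ) +
        (∫ x, (g x - (3/2) * A * x - (3/2) * D) ^ 2 ∂μ)
      ≤ (3/2) * δ + 6 * δ := add_le_add stepf stepg
    _ ≤ 8 * δ := by linarith
    _ = 8 * ∫ p in (Ioo (-1 : ℝ) 1) ×ˢ (Ioo (-1 : ℝ) 1),
          (p.1 * f p.2 + h p.2 - p.2 * g p.1 - k p.1) ^ 2 := by
        rw [hδ, hE]
        congr 1
        rw [hmeas]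
end

section
/- There exists c > 0 such that for any cube Q_r = x* + (−r/2, r/2)³ ⊂ ℝ³, any measurable subset ω ⊆ Q_r with ℒ³(ω) ≤ r³/4, and any z ∈ ℝ³, one has r² |z|² ≤ (c / r³) · min over q ∈ ℝ of ∫_{Q_r \ ω} |z·x − q|² dx. -/
open MeasureTheory Set

theorem stmt_8 :
    ∃ c : ℝ, 0 < c ∧
      ∀ (xstar : Fin 3 → ℝ) (r : ℝ), 0 < r →
        ∀ ω : Set (Fin 3 → ℝ), MeasurableSet ω →
          ω ⊆ {x | ∀ i, x i ∈ Ioo (xstar i - r / 2) (xstar i + r / 2)} →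
          volume ω ≤ ENNReal.ofReal (r ^ 3 / 4) →
          ∀ z : Fin 3 → ℝ, ∀ q : ℝ,
            r ^ 2 * (∑ i, (z i) ^ 2) ≤
              (c / r ^ 3) *
                ∫ x in {x | ∀ i, x i ∈ Ioo (xstar i - r / 2) (xstar i + r / 2)} \ ω,
                  ((∑ i, z i * x i) - q) ^ 2 := by
  refine ⟨192, by norm_num, ?_⟩
  intro xstar r hr ω hωmeas hωsub hωvol z q
  set Q : Set (Fin 3 → ℝ) := {x | ∀ i, x i ∈ Ioo (xstar i - r / 2) (xstar i + r / 2)} with hQdef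
  have hQpi : Q = Set.pi univ (fun i => Ioo (xstar i - r / 2) (xstar i + r / 2)) := by
    ext x; simp [hQdef, Set.mem_pi]
  have hQmeas : MeasurableSet Q := by
    rw [hQpi]; exact MeasurableSet.univ_pi (fun i => measurableSet_Ioo)
  set K : Set (Fin 3 → ℝ) := Set.pi univ (fun i => Icc (xstar i - r / 2) (xstar i + r / 2)) with hKdef
  have hKcomp : IsCompact K := isCompact_univ_pi (fun i => isCompact_Icc)
  have hQK : Q ⊆ K := by
    rw [hQpi]; exact Set.pi_mono (fun i _ => Ioo_subset_Icc_self)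
  set g : (Fin 3 → ℝ) → ℝ := fun x => ((∑ i, z i * x i) - q) ^ 2 with hgdef
  have hgcont : Continuous g := by
    apply Continuous.pow
    exact (continuous_finset_sum _ fun i _ => (continuous_const.mul (continuous_apply i))).sub continuous_const
  have hgint : IntegrableOn g K := hgcont.continuousOn.integrableOn_compact hKcomp
  have hgnonneg : ∀ x, 0 ≤ g x := fun x => sq_nonneg _
  have hQωmeas : MeasurableSet (Q \ ω) := hQmeas.diff hωmeas
  have hvolQ : volume Q = ENNReal.ofReal (r ^ 3) := by
    rw [hQpi, volume_pi_pi]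
    have h1 : ∀ i : Fin 3, volume (Ioo (xstar i - r / 2) (xstar i + r / 2)) = ENNReal.ofReal r := by
      intro i; rw [Real.volume_Ioo]; congr 1; ring
    rw [Finset.prod_congr rfl fun i _ => h1 i, Finset.prod_const,
      ← ENNReal.ofReal_pow hr.le]
    norm_num
  by_cases hz : (∑ i, (z i) ^ 2) = 0
  · rw [hz, mul_zero]
    apply mul_nonneg (by positivity)
    exact setIntegral_nonneg hQωmeas fun x _ => sq_nonneg _
  have hN2 : 0 < ∑ i, (z i) ^ 2 :=
    lt_of_le_of_ne (Finset.sum_nonneg fun i _ => sq_nonneg _) (Ne.symm hz)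
  -- pick maximal coordinate
  obtain ⟨i, -, hi⟩ := Finset.exists_max_image (Finset.univ : Finset (Fin 3))
    (fun k => (z k) ^ 2) ⟨0, Finset.mem_univ 0⟩
  have hzi3 : (∑ k, (z k) ^ 2) ≤ 3 * (z i) ^ 2 := by
    have h0 := hi 0 (Finset.mem_univ 0)
    have h1 := hi 1 (Finset.mem_univ 1)
    have h2 := hi 2 (Finset.mem_univ 2)
    rw [Fin.sum_univ_three]
    linarith
  have hzi : 0 < (z i) ^ 2 := by nlinarith
  have hzine : z i ≠ 0 := fun h => by simp [h] at hzi
  set t : ℝ := r * |z i| / 4 with htdef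
  have ht : 0 < t := by
    have := abs_pos.mpr hzine
    positivity
  -- slab bound
  set M : Matrix (Fin 3) (Fin 3) ℝ := Matrix.updateRow (1 : Matrix (Fin 3) (Fin 3) ℝ) i z with hMdef
  have hdet : M.det = z i := by
    fin_cases i <;>
      simp [hMdef, Matrix.det_fin_three, Matrix.updateRow_apply, Matrix.one_apply]
  set L : (Fin 3 → ℝ) →ₗ[ℝ] (Fin 3 → ℝ) := Matrix.toLin' M with hLdef
  have hLdet : LinearMap.det L = z i := by rw [hLdef, LinearMap.det_toLin']; exact hdet
  have hLi : ∀ x : Fin 3 → ℝ, L x i = ∑ k, z k * x k := by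
    intro x
    rw [hLdef, Matrix.toLin'_apply]
    simp [Matrix.mulVec, dotProduct, hMdef]
  have hLne : ∀ (x : Fin 3 → ℝ) (k : Fin 3), k ≠ i → L x k = x k := by
    intro x k hk
    rw [hLdef, Matrix.toLin'_apply]
    simp [Matrix.mulVec, dotProduct, hMdef, Matrix.updateRow_apply, hk, Matrix.one_apply]
  set B : Set (Fin 3 → ℝ) := Set.pi univ
    (fun k => if k = i then Ioo (q - t) (q + t) else Ioo (xstar k - r / 2) (xstar k + r / 2)) with hBdef
  have hvolB : volume B = ENNReal.ofReal (2 * t) * (ENNReal.ofReal r * ENNReal.ofReal r) := by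
    rw [hBdef, volume_pi_pi]
    have hb : ∀ k : Fin 3, volume (if k = i then Ioo (q - t) (q + t)
        else Ioo (xstar k - r / 2) (xstar k + r / 2)) =
        if k = i then ENNReal.ofReal (2 * t) else ENNReal.ofReal r := by
      intro k
      by_cases hk : k = i <;> simp only [hk, ↓reduceIte, Real.volume_Ioo] <;> congr 1 <;> ring
    rw [Finset.prod_congr rfl fun k _ => hb k]
    fin_cases i <;> rw [Fin.prod_univ_three] <;> simp <;> ring
  set G : Set (Fin 3 → ℝ) := (Q \ ω) ∩ {x | t ^ 2 ≤ g x} with hGdef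
  have hGmeas : MeasurableSet G :=
    hQωmeas.inter (hgcont.measurable measurableSet_Ici)
  have hGK : G ⊆ K := fun x hx => hQK hx.1.1
  have hGfin : volume G ≠ ⊤ :=
    (lt_of_le_of_lt (measure_mono hGK) hKcomp.measure_lt_top).ne
  -- (Q \ ω) \ G ⊆ L ⁻¹' B
  have hsub : (Q \ ω) \ G ⊆ L ⁻¹' B := by
    intro x hx
    have hxQ : x ∈ Q := hx.1.1
    have hxg : g x < t ^ 2 := by
      by_contra h
      exact hx.2 ⟨hx.1, le_of_not_gt h⟩
    simp only [hgdef] at hxg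
    have habs : |(∑ k, z k * x k) - q| < t := by
      nlinarith [abs_nonneg ((∑ k, z k * x k) - q), sq_abs ((∑ k, z k * x k) - q), ht]
    rw [abs_lt] at habs
    intro k _
    by_cases hk : k = i
    · subst hk
      simp only [if_pos rfl]
      rw [hLi]
      constructor <;> [linarith [habs.1]; linarith [habs.2]]
    · simp only [if_neg hk]
      rw [hLne x k hk]
      exact hxQ k
  have hslab : volume ((Q \ ω) \ G) ≤ ENNReal.ofReal (r ^ 3 / 2) := by
    calc volume ((Q \ ω) \ G) ≤ volume (L ⁻¹' B) := measure_mono hsub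
      _ = ENNReal.ofReal |(LinearMap.det L)⁻¹| * volume B :=
          Measure.addHaar_preimage_linearMap volume (by rw [hLdet]; exact hzine) B
      _ = ENNReal.ofReal (r ^ 3 / 2) := by
          have habs0 : |z i| ≠ 0 := abs_ne_zero.mpr hzine
          rw [hLdet, hvolB, ← ENNReal.ofReal_mul hr.le,
            ← ENNReal.ofReal_mul (by positivity : (0:ℝ) ≤ 2 * t),
            ← ENNReal.ofReal_mul (abs_nonneg _)]
          congr 1
          rw [htdef, abs_inv]
          field_simp
          ring
  -- volume G ≥ r^3/4
  have hchain : ENNReal.ofReal (r ^ 3) ≤ ENNReal.ofReal (r ^ 3 / 4) + (volume G + ENNReal.ofReal (r ^ 3 / 2)) := by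
    calc ENNReal.ofReal (r ^ 3) = volume Q := hvolQ.symm
      _ ≤ volume (ω ∪ (Q \ ω)) := measure_mono (fun x hx => by
            by_cases hω : x ∈ ω
            · exact Or.inl hω
            · exact Or.inr ⟨hx, hω⟩)
      _ ≤ volume ω + volume (Q \ ω) := measure_union_le _ _
      _ ≤ ENNReal.ofReal (r ^ 3 / 4) + (volume G + ENNReal.ofReal (r ^ 3 / 2)) := by
          gcongr
          calc volume (Q \ ω) ≤ volume (G ∪ ((Q \ ω) \ G)) := measure_mono (fun x hx => by
                by_cases hG : x ∈ G
                · exact Or.inl hG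
                · exact Or.inr ⟨hx, hG⟩)
            _ ≤ volume G + volume ((Q \ ω) \ G) := measure_union_le _ _
            _ ≤ volume G + ENNReal.ofReal (r ^ 3 / 2) := by gcongr
  have hGlow : ENNReal.ofReal (r ^ 3 / 4) ≤ volume G := by
    have hfin2 : ENNReal.ofReal (r ^ 3 / 4) + ENNReal.ofReal (r ^ 3 / 2) ≠ ⊤ :=
      ENNReal.add_ne_top.mpr ⟨ENNReal.ofReal_ne_top, ENNReal.ofReal_ne_top⟩
    have h1 : ENNReal.ofReal (r ^ 3 / 4) + ENNReal.ofReal (r ^ 3 / 2) + ENNReal.ofReal (r ^ 3 / 4)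
        = ENNReal.ofReal (r ^ 3) := by
      rw [← ENNReal.ofReal_add (by positivity) (by positivity),
        ← ENNReal.ofReal_add (by positivity) (by positivity)]
      congr 1; ring
    have h2 : ENNReal.ofReal (r ^ 3 / 4) + ENNReal.ofReal (r ^ 3 / 2) + ENNReal.ofReal (r ^ 3 / 4)
        ≤ ENNReal.ofReal (r ^ 3 / 4) + ENNReal.ofReal (r ^ 3 / 2) + volume G := by
      rw [h1]
      calc ENNReal.ofReal (r ^ 3) ≤ ENNReal.ofReal (r ^ 3 / 4) + (volume G + ENNReal.ofReal (r ^ 3 / 2)) := hchain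
        _ = ENNReal.ofReal (r ^ 3 / 4) + ENNReal.ofReal (r ^ 3 / 2) + volume G := by
          rw [add_comm (volume G), ← add_assoc]
    exact (ENNReal.add_le_add_iff_left hfin2).mp h2
  have hGreal : r ^ 3 / 4 ≤ (volume G).toReal := by
    have := ENNReal.toReal_mono hGfin hGlow
    rwa [ENNReal.toReal_ofReal (by positivity)] at this
  -- Chebyshev
  have hcheb : t ^ 2 * (volume G).toReal ≤ ∫ x in G, g x := by
    apply setIntegral_ge_of_const_le_real hGmeas hGfin
    · exact fun x hx => hx.2
    · exact hgint.mono_set hGK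
  have hmono : (∫ x in G, g x) ≤ ∫ x in Q \ ω, g x := by
    apply setIntegral_mono_set (hgint.mono_set (fun x hx => hQK hx.1))
    · exact Filter.Eventually.of_forall fun x => hgnonneg x
    · exact HasSubset.Subset.eventuallyLE (fun x hx => hx.1)
  have hI : t ^ 2 * (r ^ 3 / 4) ≤ ∫ x in Q \ ω, g x := by
    calc t ^ 2 * (r ^ 3 / 4) ≤ t ^ 2 * (volume G).toReal := by nlinarith
      _ ≤ ∫ x in G, g x := hcheb
      _ ≤ ∫ x in Q \ ω, g x := hmono
  have ht2 : r ^ 2 * (∑ k, (z k) ^ 2) ≤ 48 * t ^ 2 := by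
    rw [htdef]
    have hsq : |z i| ^ 2 = (z i) ^ 2 := sq_abs _
    nlinarith [sq_nonneg r]
  calc r ^ 2 * (∑ k, (z k) ^ 2) ≤ 48 * t ^ 2 := ht2
    _ = (192 / r ^ 3) * (t ^ 2 * (r ^ 3 / 4)) := by field_simp; ring
    _ ≤ (192 / r ^ 3) * ∫ x in Q \ ω, g x := by
        apply mul_le_mul_of_nonneg_left hI (by positivity)
end

section
/- Let β : (−1,1) → ℝ be given by β(x₃) = ∫_{−1}^{x₃} φ(t) dt − c*, where φ ∈ L²((−1,1)) satisfies |φ| ≥ 1 almost everywhere and changes sign at most N times, and c* is chosen so that ∫_{(−1,1)} β = 0. Then there is a universal constant c > 0 with ∫_{(−1,1)} β² dx₃ ≥ c/(N+1)². -/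
open MeasureTheory Set intervalIntegral

/-- If a nonnegative integrable function `g` on `(a,b)` satisfies
`(y-x)^2 ≤ 2 (g x + g y)` for all `x < y` in `(a,b)`, then its integral is
at least `(b-a)^3/64`. -/
lemma auxA {g : ℝ → ℝ} {a b : ℝ} (hab : a ≤ b)
    (hg0 : ∀ x, 0 ≤ g x)
    (hint : IntegrableOn g (Ioo a b))
    (hkey : ∀ x ∈ Ioo a b, ∀ y ∈ Ioo a b, x < y → (y - x) ^ 2 ≤ 2 * (g x + g y)) :
    (b - a) ^ 3 / 64 ≤ ∫ x in Ioo a b, g x := by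
  rcases eq_or_lt_of_le hab with rfl | hab'
  · simp
  set L : ℝ := b - a with hLdef
  have hL : 0 < L := by simp [hLdef]; linarith
  -- helper: a constant lower bound on a subinterval bounds the integral
  have hsub : ∀ c d : ℝ, a ≤ c → d ≤ b → (∀ x ∈ Ioo c d, L ^ 2 / 16 ≤ g x) →
      (d - c) * (L ^ 2 / 16) ≤ ∫ x in Ioo a b, g x := by
    intro c d hac hdb hbound
    rcases le_or_gt d c with hdc | hcd
    · have h1 : (d - c) * (L ^ 2 / 16) ≤ 0 := by
        apply mul_nonpos_of_nonpos_of_nonneg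
        · linarith
        · positivity
      refine h1.trans (setIntegral_nonneg measurableSet_Ioo fun x _ => hg0 x)
    · have hsubset : Ioo c d ⊆ Ioo a b := Ioo_subset_Ioo hac hdb
      have h1 : (L ^ 2 / 16) * ((volume (Ioo c d)).toReal) ≤ ∫ x in Ioo c d, g x := by
        have h := setIntegral_ge_of_const_le measurableSet_Ioo (measure_Ioo_lt_top).ne hbound
          (hint.mono_set hsubset)
        rw [smul_eq_mul, mul_comm] at h; exact h
      have h2 : (∫ x in Ioo c d, g x) ≤ ∫ x in Ioo a b, g x := by
        apply setIntegral_mono_set hint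
        · exact ae_of_all _ hg0
        · exact hsubset.eventuallyLE
      have h3 : (volume (Ioo c d)).toReal = d - c := by
        rw [Real.volume_Ioo, ENNReal.toReal_ofReal (by linarith)]
      rw [h3] at h1
      nlinarith [h1, h2]
  by_cases hcase : ∃ x₀ ∈ Ioo a (a + L / 4), g x₀ ≤ L ^ 2 / 16
  · obtain ⟨x₀, hx₀, hgx₀⟩ := hcase
    have hx₀' : x₀ ∈ Ioo a b := ⟨hx₀.1, by have := hx₀.2; linarith⟩
    have hbound : ∀ y ∈ Ioo (b - L / 4) b, L ^ 2 / 16 ≤ g y := by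
      intro y hy
      have hy' : y ∈ Ioo a b := ⟨by have := hy.1; linarith, hy.2⟩
      have hxy : x₀ < y := by have := hx₀.2; have := hy.1; linarith
      have hd : L / 2 ≤ y - x₀ := by have := hx₀.2; have := hy.1; linarith
      have hk := hkey x₀ hx₀' y hy' hxy
      nlinarith [hk, hd, hL]
    have := hsub (b - L / 4) b (by linarith) le_rfl hbound
    calc (b - a) ^ 3 / 64 = (b - (b - L / 4)) * (L ^ 2 / 16) := by
          simp only [hLdef]; ring
      _ ≤ _ := this
  · push_neg at hcase
    have hbound : ∀ x ∈ Ioo a (a + L / 4), L ^ 2 / 16 ≤ g x :=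
      fun x hx => (hcase x hx).le
    have := hsub a (a + L / 4) le_rfl (by linarith) hbound
    calc (b - a) ^ 3 / 64 = (a + L / 4 - a) * (L ^ 2 / 16) := by
          simp only [hLdef]; ring
      _ ≤ _ := this

theorem stmt_13 :
    ∃ c : ℝ, 0 < c ∧
      ∀ (N : ℕ) (φ : ℝ → ℝ) (cstar : ℝ) (β : ℝ → ℝ),
        MemLp φ 2 (volume.restrict (Ioo (-1 : ℝ) 1)) →
        (∀ᵐ x : ℝ, x ∈ Ioo (-1 : ℝ) 1 → 1 ≤ |φ x|) →
        -- φ changes sign at most N times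
        (∃ t : Fin (N + 2) → ℝ, Monotone t ∧ t 0 = -1 ∧ t (Fin.last (N + 1)) = 1 ∧
          ∀ i : Fin (N + 1),
            (∀ᵐ x : ℝ, x ∈ Ioo (t i.castSucc) (t i.succ) → 0 ≤ φ x) ∨
            (∀ᵐ x : ℝ, x ∈ Ioo (t i.castSucc) (t i.succ) → φ x ≤ 0)) →
        (∀ x : ℝ, β x = (∫ s in (-1 : ℝ)..x, φ s) - cstar) →
        (∫ x in Ioo (-1 : ℝ) 1, β x) = 0 →
        (∫ x in Ioo (-1 : ℝ) 1, (β x) ^ 2) ≥ c / ((N : ℝ) + 1) ^ 2 := by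
  refine ⟨1/8, by norm_num, ?_⟩
  rintro N φ cstar β hφ2 hφ1 ⟨t, htm, ht0, htl, hsign⟩ hβ -
  haveI : IsFiniteMeasure (volume.restrict (Ioo (-1 : ℝ) 1)) :=
    ⟨by rw [Measure.restrict_apply_univ]; exact measure_Ioo_lt_top⟩
  have hInt : IntegrableOn φ (Ioo (-1 : ℝ) 1) := hφ2.integrable (by norm_num)
  have hIcc : IntegrableOn φ (Icc (-1 : ℝ) 1) := by
    rwa [IntegrableOn, ← Measure.restrict_congr_set Ioo_ae_eq_Icc]
  have huIcc : uIcc (-1 : ℝ) 1 = Icc (-1 : ℝ) 1 := uIcc_of_le (by norm_num)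
  -- continuity of β on [-1,1]
  have hβc : ContinuousOn β (Icc (-1 : ℝ) 1) := by
    have h1 : ContinuousOn (fun x => ∫ s in (-1 : ℝ)..x, φ s) (Icc (-1 : ℝ) 1) := by
      have := intervalIntegral.continuousOn_primitive_interval
        (a := (-1 : ℝ)) (b := 1) (f := φ) (μ := volume) (by rwa [huIcc])
      rwa [huIcc] at this
    have hβeq : β = fun x => (∫ s in (-1 : ℝ)..x, φ s) - cstar := funext hβ
    rw [hβeq]
    exact h1.sub continuousOn_const
  have hg : IntegrableOn (fun x => β x ^ 2) (Ioo (-1 : ℝ) 1) :=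
    ((hβc.pow 2).integrableOn_Icc).mono_set Ioo_subset_Icc_self
  -- the partition points lie in [-1,1]
  have hmem : ∀ j : Fin (N + 2), t j ∈ Icc (-1 : ℝ) 1 := fun j =>
    ⟨ht0 ▸ htm (Fin.zero_le j), htl ▸ htm (Fin.le_last j)⟩
  have hsubI : ∀ i : Fin (N + 1), Ioo (t i.castSucc) (t i.succ) ⊆ Ioo (-1 : ℝ) 1 := by
    intro i x hx
    exact ⟨lt_of_le_of_lt (hmem i.castSucc).1 hx.1, lt_of_lt_of_le hx.2 (hmem i.succ).2⟩
  -- key slope estimate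
  have hkey : ∀ i : Fin (N + 1), ∀ x ∈ Ioo (t i.castSucc) (t i.succ),
      ∀ y ∈ Ioo (t i.castSucc) (t i.succ), x < y →
      (y - x) ^ 2 ≤ 2 * (β x ^ 2 + β y ^ 2) := by
    intro i x hx y hy hxy
    have hxI : x ∈ Ioo (-1 : ℝ) 1 := hsubI i hx
    have hyI : y ∈ Ioo (-1 : ℝ) 1 := hsubI i hy
    have hii : ∀ u v : ℝ, u ∈ Icc (-1:ℝ) 1 → v ∈ Icc (-1:ℝ) 1 →
        IntervalIntegrable φ volume u v := by
      intro u v hu hv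
      exact (hIcc.mono_set (uIcc_subset_Icc hu hv)).intervalIntegrable
    have hdiff : β y - β x = ∫ s in x..y, φ s := by
      rw [hβ x, hβ y]
      have := intervalIntegral.integral_interval_sub_left
        (hii (-1) y ⟨le_refl _, by norm_num⟩ (Ioo_subset_Icc_self hyI))
        (hii (-1) x ⟨le_refl _, by norm_num⟩ (Ioo_subset_Icc_self hxI))
      rw [← this]; ring
    have hxyI : IntervalIntegrable φ volume x y :=
      hii x y (Ioo_subset_Icc_self hxI) (Ioo_subset_Icc_self hyI)
    have hsubIcc : Icc x y ⊆ Ioo (t i.castSucc) (t i.succ) :=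
      fun s hs => ⟨lt_of_lt_of_le hx.1 hs.1, lt_of_le_of_lt hs.2 hy.2⟩
    have hsubIcc' : Icc x y ⊆ Ioo (-1 : ℝ) 1 := fun s hs => hsubI i (hsubIcc hs)
    have habs : y - x ≤ |β y - β x| := by
      rcases hsign i with hpos | hneg
      · -- φ ≥ 1 a.e. on the interval
        have h1 : (fun _ : ℝ => (1 : ℝ)) ≤ᵐ[volume.restrict (Icc x y)] φ := by
          refine (ae_restrict_iff' measurableSet_Icc).2 ?_
          filter_upwards [hφ1, hpos] with s h1 h2 hs
          have := h1 (hsubIcc' hs)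
          have := h2 (hsubIcc hs)
          cases abs_cases (φ s) with
          | inl h => linarith [h.1]
          | inr h => linarith [h.1]
        have hmono := intervalIntegral.integral_mono_ae_restrict hxy.le
          (intervalIntegrable_const) hxyI h1
        rw [intervalIntegral.integral_const] at hmono
        simp only [smul_eq_mul, mul_one] at hmono
        calc y - x ≤ ∫ s in x..y, φ s := hmono
          _ = β y - β x := hdiff.symm
          _ ≤ |β y - β x| := le_abs_self _
      · -- φ ≤ -1 a.e. on the interval
        have h1 : φ ≤ᵐ[volume.restrict (Icc x y)] (fun _ : ℝ => (-1 : ℝ)) := by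
          refine (ae_restrict_iff' measurableSet_Icc).2 ?_
          filter_upwards [hφ1, hneg] with s h1 h2 hs
          have := h1 (hsubIcc' hs)
          have := h2 (hsubIcc hs)
          cases abs_cases (φ s) with
          | inl h => linarith [h.1]
          | inr h => linarith [h.1]
        have hmono := intervalIntegral.integral_mono_ae_restrict hxy.le
          hxyI (intervalIntegrable_const) h1
        rw [intervalIntegral.integral_const] at hmono
        simp only [smul_eq_mul, mul_neg_one] at hmono
        have : β y - β x ≤ -(y - x) := by rw [hdiff]; linarith
        calc y - x ≤ -(β y - β x) := by linarith
          _ ≤ |β y - β x| := neg_le_abs _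
    have h2 : |β y - β x| ≤ |β x| + |β y| := by
      calc |β y - β x| ≤ |β y| + |β x| := abs_sub _ _
        _ = |β x| + |β y| := by ring
    nlinarith [sq_abs (β x), sq_abs (β y), sq_nonneg (|β x| - |β y|),
      abs_nonneg (β x), abs_nonneg (β y), habs, h2, sub_nonneg.2 hxy.le]
  -- per-interval lower bound
  have hIbound : ∀ i : Fin (N + 1),
      (t i.succ - t i.castSucc) ^ 3 / 64 ≤ ∫ x in Ioo (t i.castSucc) (t i.succ), β x ^ 2 :=
    fun i => auxA (htm (Fin.castSucc_lt_succ (i := i)).le) (fun x => sq_nonneg _)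
      (hg.mono_set (hsubI i)) (hkey i)
  -- disjointness
  have hdisj : Pairwise (Function.onFun Disjoint
      (fun i : Fin (N + 1) => Ioo (t i.castSucc) (t i.succ))) := by
    intro i j hij
    rcases lt_or_gt_of_ne hij with h | h
    · have hv : i.val < j.val := h
      have hle : t i.succ ≤ t j.castSucc := htm (by
        rw [Fin.le_def, Fin.val_succ, Fin.coe_castSucc]; omega)
      rw [Function.onFun, Set.disjoint_left]
      intro x hx hx'
      exact absurd (hx.2.trans_le hle) (not_lt.2 hx'.1.le)
    · have hv : j.val < i.val := h
      have hle : t j.succ ≤ t i.castSucc := htm (by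
        rw [Fin.le_def, Fin.val_succ, Fin.coe_castSucc]; omega)
      rw [Function.onFun, Set.disjoint_left]
      intro x hx hx'
      exact absurd (hx'.2.trans_le hle) (not_lt.2 hx.1.le)
  -- sum of the integrals is at most the total integral
  have hsum : (∑ i : Fin (N + 1), ∫ x in Ioo (t i.castSucc) (t i.succ), β x ^ 2)
      ≤ ∫ x in Ioo (-1 : ℝ) 1, β x ^ 2 := by
    rw [← integral_iUnion_fintype (fun i => measurableSet_Ioo) hdisj
      (fun i => hg.mono_set (hsubI i))]
    apply setIntegral_mono_set hg (ae_of_all _ fun x => sq_nonneg (β x))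
    exact (iUnion_subset hsubI).eventuallyLE
  -- telescoping: total length is 2
  set f : ℕ → ℝ := fun n => if h : n < N + 2 then t ⟨n, h⟩ else 0 with hf
  have hfi : ∀ i : Fin (N + 1),
      t i.succ - t i.castSucc = f (i.val + 1) - f i.val := by
    intro i
    have h1 : f (i.val + 1) = t i.succ := by
      rw [hf]; simp only; rw [dif_pos (by omega)]
      congr 1
    have h2 : f i.val = t i.castSucc := by
      rw [hf]; simp only; rw [dif_pos (by omega)]
      congr 1
    rw [h1, h2]
  have hsum2 : (∑ i : Fin (N + 1), (t i.succ - t i.castSucc)) = 2 := by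
    have : (∑ i : Fin (N + 1), (t i.succ - t i.castSucc))
        = ∑ i ∈ Finset.range (N + 1), (f (i + 1) - f i) := by
      rw [← Fin.sum_univ_eq_sum_range]
      exact Finset.sum_congr rfl fun i _ => hfi i
    rw [this, Finset.sum_range_sub]
    have h1 : f (N + 1) = t (Fin.last (N + 1)) := by
      rw [hf]; simp only; rw [dif_pos (by omega)]
      congr 1
    have h2 : f 0 = t 0 := by
      rw [hf]; simp only; rw [dif_pos (by omega)]
      congr 1
    rw [h1, h2, ht0, htl]; norm_num
  -- power mean inequality
  have hpow := pow_sum_div_card_le_sum_pow (s := Finset.univ)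
    (f := fun i : Fin (N + 1) => t i.succ - t i.castSucc)
    (fun i _ => sub_nonneg.2 (htm (Fin.castSucc_lt_succ (i := i)).le)) 2
  rw [hsum2] at hpow
  simp only [Finset.card_univ, Fintype.card_fin] at hpow
  -- conclude
  have hNpos : (0 : ℝ) < ((N : ℝ) + 1) ^ 2 := by positivity
  have hchain : (∑ i : Fin (N + 1), (t i.succ - t i.castSucc) ^ 3) / 64
      ≤ ∑ i : Fin (N + 1), ∫ x in Ioo (t i.castSucc) (t i.succ), β x ^ 2 := by
    rw [Finset.sum_div]
    exact Finset.sum_le_sum fun i _ => hIbound i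
  have h8 : (2 : ℝ) ^ 3 / ((N : ℝ) + 1) ^ 2
      ≤ ∑ i : Fin (N + 1), (t i.succ - t i.castSucc) ^ 3 := by
    convert hpow using 2
    · rfl
    · push_cast; ring
  rw [ge_iff_le]
  calc (1 / 8 : ℝ) / ((N : ℝ) + 1) ^ 2
      = ((2 : ℝ) ^ 3 / ((N : ℝ) + 1) ^ 2) / 64 := by ring
    _ ≤ (∑ i : Fin (N + 1), (t i.succ - t i.castSucc) ^ 3) / 64 := by
        linarith
    _ ≤ ∑ i : Fin (N + 1), ∫ x in Ioo (t i.castSucc) (t i.succ), β x ^ 2 := hchain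
    _ ≤ ∫ x in Ioo (-1 : ℝ) 1, β x ^ 2 := hsum
end
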